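/- For p, q ≥ 1, in the monoid M = ⟨a, b | a = b(aᵖb)^q⟩⁺ the element a^{p+1} is central, M is of O-type, and the associated group ⟨a, b | a = b(aᵖb)^q⟩ is isomorphic to the torus knot group ⟨x, y | x^{p+1} = y^{q+1}⟩ via x = a, y = aᵖb. -/

import Mathlib

namespace Stmt17

/-- Two letters: `a = true`, `b = false`. -/
abbrev A : Bool := true
abbrev B : Bool := false

/-- The word `b (aᵖ b)^q`. -/
def rhs (p q : ℕ) : List Bool :=
  B :: (List.replicate q (List.replicate p A ++ [B])).flatten

/-- The single triangular relation `a = b (aᵖ b)^q`. -/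
def R17 (p q : ℕ) : Set (List Bool × List Bool) := {([A], rhs p q)}

def posCon (R : Set (List Bool × List Bool)) : Con (FreeMonoid Bool) :=
  conGen (fun u v => (FreeMonoid.toList u, FreeMonoid.toList v) ∈ R)

/-- The monoid `⟨a, b | a = b (aᵖ b)^q⟩⁺`. -/
def M17 (p q : ℕ) : Type := (posCon (R17 p q)).Quotient

instance (p q : ℕ) : Monoid (M17 p q) :=
  inferInstanceAs (Monoid (posCon (R17 p q)).Quotient)

def cls (p q : ℕ) (u : List Bool) : M17 p q :=
  ((FreeMonoid.ofList u : FreeMonoid Bool) : (posCon (R17 p q)).Quotient)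

/-- The torus knot group `⟨x, y | x^{p+1} = y^{q+1}⟩`. -/
def TorusGroup (p q : ℕ) : Type :=
  PresentedGroup ({FreeGroup.of A ^ (p + 1) * (FreeGroup.of B ^ (q + 1))⁻¹} :
    Set (FreeGroup Bool))

instance (p q : ℕ) : Group (TorusGroup p q) :=
  inferInstanceAs (Group (PresentedGroup _))

/-- The group `⟨a, b | a = b (aᵖ b)^q⟩`. -/
def MonGroup (p q : ℕ) : Type :=
  PresentedGroup ({FreeGroup.of A *
      (FreeGroup.of B * (FreeGroup.of A ^ p * FreeGroup.of B) ^ q)⁻¹} :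
    Set (FreeGroup Bool))

instance (p q : ℕ) : Group (MonGroup p q) :=
  inferInstanceAs (Group (PresentedGroup _))

end Stmt17

namespace Stmt17
section Dev
variable (p q : ℕ)

/-! ### Words -/

def repA (e : ℕ) : List Bool := List.replicate e A
def Yw : List Bool := repA p ++ [B]
def Ypow (f : ℕ) : List Bool := (List.replicate f (Yw p)).flatten

lemma Ypow_zero : Ypow p 0 = [] := rfl
lemma Ypow_succ (f : ℕ) : Ypow p (f+1) = Yw p ++ Ypow p f := by
  simp [Ypow, List.replicate_succ]

lemma rhs_eq : rhs p q = [B] ++ Ypow p q := rfl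

/-! ### cls basics -/

lemma cls_append (u v : List Bool) : cls p q (u ++ v) = cls p q u * cls p q v := rfl

lemma cls_nil : cls p q [] = 1 := rfl

/-- notation for the two generators and derived elements -/
def aM : M17 p q := cls p q [A]
def bM : M17 p q := cls p q [B]
def yM : M17 p q := cls p q (Yw p)
def cM : M17 p q := (aM p q) ^ (p+1)

lemma cls_repA (e : ℕ) : cls p q (repA e) = (aM p q) ^ e := by
  induction e with
  | zero => simp [repA, cls_nil]
  | succ n ih =>
    have : repA (n+1) = [A] ++ repA n := by simp [repA, List.replicate_succ]
    rw [this, cls_append, ih, pow_succ']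
    rfl

lemma cls_Ypow (f : ℕ) : cls p q (Ypow p f) = (yM p q) ^ f := by
  induction f with
  | zero => simp [Ypow_zero, cls_nil]
  | succ n ih => rw [Ypow_succ, cls_append, ih, pow_succ']; rfl

lemma yM_eq : yM p q = (aM p q)^p * bM p q := by
  rw [yM, Yw, cls_append, cls_repA]; rfl

lemma cls_rel : cls p q [A] = cls p q (rhs p q) := by
  apply (Con.eq _).mpr
  exact ConGen.Rel.of _ _ (by simp [R17, FreeMonoid.toList_ofList])

/-- the defining relation: `a = b * y^q` -/
lemma rel0 : aM p q = bM p q * (yM p q)^q := by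
  have := cls_rel p q
  rw [rhs_eq, cls_append, cls_Ypow] at this
  exact this

lemma cM_eq_ypow : cM p q = (yM p q)^(q+1) := by
  have h1 : cM p q = (aM p q)^p * aM p q := pow_succ _ _
  rw [h1]
  nth_rewrite 2 [rel0 p q]
  rw [← mul_assoc, ← yM_eq, ← pow_succ']

lemma b_mul_c : bM p q * cM p q = aM p q * yM p q := by
  rw [cM_eq_ypow, pow_succ, ← mul_assoc, ← rel0]

lemma a_mul_y : aM p q * yM p q = cM p q * bM p q := by
  have : aM p q * ((aM p q)^p * bM p q) = (aM p q)^(p+1) * bM p q := by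
    rw [← mul_assoc, ← pow_succ']
  rw [yM_eq, this, cM]

lemma c_comm_b : bM p q * cM p q = cM p q * bM p q := by
  rw [b_mul_c, a_mul_y]

lemma c_comm_cls (u : List Bool) : cls p q u * cM p q = cM p q * cls p q u := by
  induction u with
  | nil => rw [cls_nil, one_mul, mul_one]
  | cons α t ih =>
    have h : cls p q (α :: t) = cls p q [α] * cls p q t := cls_append p q [α] t
    rw [h, mul_assoc, ih, ← mul_assoc, ← mul_assoc]
    congr 1
    cases α with
    | false => exact c_comm_b p q
    | true =>
      show aM p q * cM p q = cM p q * aM p q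
      rw [cM, ← pow_succ', ← pow_succ]

lemma cls_surjective (g : M17 p q) : ∃ u : List Bool, g = cls p q u := by
  induction g using Con.induction_on with
  | H x => exact ⟨FreeMonoid.toList x, by simp [cls, FreeMonoid.ofList_toList]; rfl⟩

lemma c_central (g : M17 p q) : g * cM p q = cM p q * g := by
  obtain ⟨u, rfl⟩ := cls_surjective p q g
  exact c_comm_cls p q u

/-! ### Torus group basics -/

def xT : TorusGroup p q := PresentedGroup.of A
def yT : TorusGroup p q := PresentedGroup.of B

lemma torus_rel : (xT p q)^(p+1) = (yT p q)^(q+1) := by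
  have h : (PresentedGroup.mk _ (FreeGroup.of A ^ (p + 1) * (FreeGroup.of B ^ (q + 1))⁻¹) :
      TorusGroup p q) = 1 := by
    apply (QuotientGroup.eq_one_iff _).mpr
    exact Subgroup.subset_normalClosure rfl
  rw [map_mul, map_inv, map_pow, map_pow] at h
  have := mul_inv_eq_one.mp h
  exact this

def cT : TorusGroup p q := (xT p q)^(p+1)

lemma cT_central (g : TorusGroup p q) : cT p q * g = g * cT p q := by
  have hmem : ∀ g : TorusGroup p q, g ∈ Subgroup.centralizer {cT p q} := by
    intro g
    apply PresentedGroup.generated_by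
    intro j
    refine (Subgroup.mem_centralizer_singleton_iff (G := TorusGroup p q)).mpr ?_
    cases j with
    | true =>
      show xT p q * cT p q = cT p q * xT p q
      rw [cT, ← pow_succ', ← pow_succ]
    | false =>
      show yT p q * cT p q = cT p q * yT p q
      rw [cT, torus_rel, ← pow_succ', ← pow_succ]
  exact ((Subgroup.mem_centralizer_singleton_iff).mp (hmem g)).symm

/-! ### the homomorphism φ : M17 → TorusGroup -/

def FB : Bool → TorusGroup p q := fun α => if α then xT p q else ((xT p q)^p)⁻¹ * yT p q

def pw (u : List Bool) : TorusGroup p q := (u.map (FB p q)).prod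

lemma pw_append (u v : List Bool) : pw p q (u ++ v) = pw p q u * pw p q v := by
  simp [pw]

lemma pw_repA (e : ℕ) : pw p q (repA e) = (xT p q)^e := by
  simp [pw, repA, FB, List.map_replicate]

lemma pw_Yw : pw p q (Yw p) = yT p q := by
  rw [Yw, pw_append, pw_repA]
  show (xT p q)^p * (FB p q B * 1) = yT p q
  rw [mul_one]
  show (xT p q)^p * (((xT p q)^p)⁻¹ * yT p q) = yT p q
  rw [← mul_assoc, mul_inv_cancel, one_mul]

lemma pw_Ypow (f : ℕ) : pw p q (Ypow p f) = (yT p q)^f := by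
  induction f with
  | zero => simp [Ypow_zero]; rfl
  | succ n ih => rw [Ypow_succ, pw_append, pw_Yw, ih, pow_succ']

lemma pw_rhs : pw p q (rhs p q) = xT p q := by
  rw [rhs_eq, pw_append, pw_Ypow]
  show (((xT p q)^p)⁻¹ * yT p q * 1) * (yT p q)^q = xT p q
  rw [mul_one, mul_assoc, ← pow_succ', ← torus_rel, pow_succ]
  rw [← mul_assoc, inv_mul_cancel, one_mul]

def phi : M17 p q →* TorusGroup p q := by
  refine Con.lift _ (FreeMonoid.lift (FB p q)) (Con.conGen_le.mpr ?_)
  intro u v h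
  have h1 : FreeMonoid.toList u = [A] := congrArg Prod.fst (Set.mem_singleton_iff.mp h)
  have h2 : FreeMonoid.toList v = rhs p q := congrArg Prod.snd (Set.mem_singleton_iff.mp h)
  rw [Con.ker_rel, FreeMonoid.lift_apply, FreeMonoid.lift_apply]
  show pw p q _ = pw p q _
  rw [h1, h2, pw_rhs]
  show FB p q A * 1 = xT p q
  rw [mul_one]; rfl

lemma phi_cls (u : List Bool) : phi p q (cls p q u) = pw p q u := by
  show (FreeMonoid.lift (FB p q)) (FreeMonoid.ofList u) = _
  rw [FreeMonoid.lift_ofList]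
  rfl

end Dev
end Stmt17
namespace Stmt17
section Iso
variable (p q : ℕ)

def aG : MonGroup p q := PresentedGroup.of A
def bG : MonGroup p q := PresentedGroup.of B

lemma mon_rel : aG p q = bG p q * ((aG p q)^p * bG p q)^q := by
  have h : (PresentedGroup.mk _ (FreeGroup.of A *
      (FreeGroup.of B * (FreeGroup.of A ^ p * FreeGroup.of B) ^ q)⁻¹) : MonGroup p q) = 1 := by
    apply (QuotientGroup.eq_one_iff _).mpr
    exact Subgroup.subset_normalClosure rfl
  rw [map_mul, map_inv, map_mul, map_pow, map_mul, map_pow] at h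
  exact mul_inv_eq_one.mp h

lemma mon_pow_rel : ((aG p q)^p * bG p q)^(q+1) = (aG p q)^(p+1) := by
  rw [pow_succ', mul_assoc, ← mon_rel p q, ← pow_succ]

def fT : Bool → MonGroup p q := fun α => if α then aG p q else (aG p q)^p * bG p q

lemma fT_rel : ∀ r ∈ ({FreeGroup.of A ^ (p + 1) * (FreeGroup.of B ^ (q + 1))⁻¹} :
    Set (FreeGroup Bool)), FreeGroup.lift (fT p q) r = 1 := by
  intro r hr
  rw [Set.mem_singleton_iff.mp hr]
  rw [map_mul, map_inv, map_pow, map_pow, FreeGroup.lift_apply_of, FreeGroup.lift_apply_of]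
  show (fT p q A)^(p+1) * ((fT p q B)^(q+1))⁻¹ = 1
  have : fT p q A = aG p q := rfl
  have h2 : fT p q B = (aG p q)^p * bG p q := rfl
  rw [this, h2, mon_pow_rel, mul_inv_cancel]

def fTM : TorusGroup p q →* MonGroup p q := PresentedGroup.toGroup (fT_rel p q)

def gT : Bool → TorusGroup p q := fun α => if α then xT p q else ((xT p q)^p)⁻¹ * yT p q

lemma gT_rel : ∀ r ∈ ({FreeGroup.of A *
      (FreeGroup.of B * (FreeGroup.of A ^ p * FreeGroup.of B) ^ q)⁻¹} :
    Set (FreeGroup Bool)), FreeGroup.lift (gT p q) r = 1 := by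
  intro r hr
  rw [Set.mem_singleton_iff.mp hr]
  rw [map_mul, map_inv, map_mul, map_pow, map_mul, map_pow, FreeGroup.lift_apply_of, FreeGroup.lift_apply_of]
  show xT p q * ((((xT p q)^p)⁻¹ * yT p q) * ((xT p q)^p * (((xT p q)^p)⁻¹ * yT p q))^q)⁻¹ = 1
  have h1 : (xT p q)^p * (((xT p q)^p)⁻¹ * yT p q) = yT p q := by
    rw [← mul_assoc, mul_inv_cancel, one_mul]
  rw [h1]
  have h2 : ((xT p q)^p)⁻¹ * yT p q * (yT p q)^q = xT p q := by
    rw [mul_assoc, ← pow_succ', ← torus_rel, pow_succ, ← mul_assoc, inv_mul_cancel, one_mul]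
  rw [h2, mul_inv_cancel]

def gMT : MonGroup p q →* TorusGroup p q := PresentedGroup.toGroup (gT_rel p q)

lemma fTM_x : fTM p q (xT p q) = aG p q := PresentedGroup.toGroup.of (fT_rel p q)
lemma fTM_y : fTM p q (yT p q) = (aG p q)^p * bG p q := PresentedGroup.toGroup.of (fT_rel p q)
lemma gMT_a : gMT p q (aG p q) = xT p q := PresentedGroup.toGroup.of (gT_rel p q)
lemma gMT_b : gMT p q (bG p q) = ((xT p q)^p)⁻¹ * yT p q := PresentedGroup.toGroup.of (gT_rel p q)

lemma gf_id : (gMT p q).comp (fTM p q) = MonoidHom.id _ := by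
  apply PresentedGroup.ext
  intro x
  cases x with
  | true =>
    show gMT p q (fTM p q (xT p q)) = xT p q
    rw [fTM_x, gMT_a]
  | false =>
    show gMT p q (fTM p q (yT p q)) = yT p q
    rw [fTM_y, map_mul, map_pow, gMT_a, gMT_b, ← mul_assoc, mul_inv_cancel, one_mul]

lemma fg_id : (fTM p q).comp (gMT p q) = MonoidHom.id _ := by
  apply PresentedGroup.ext
  intro x
  cases x with
  | true =>
    show fTM p q (gMT p q (aG p q)) = aG p q
    rw [gMT_a, fTM_x]
  | false =>
    show fTM p q (gMT p q (bG p q)) = bG p q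
    rw [gMT_b, map_mul, map_inv, map_pow, fTM_x, fTM_y, ← mul_assoc, inv_mul_cancel, one_mul]

def eTM : TorusGroup p q ≃* MonGroup p q :=
  { toFun := fTM p q
    invFun := gMT p q
    left_inv := fun g => DFunLike.congr_fun (gf_id p q) g
    right_inv := fun g => DFunLike.congr_fun (fg_id p q) g
    map_mul' := (fTM p q).map_mul }

lemma eTM_of_A : eTM p q (PresentedGroup.of A) = PresentedGroup.of A := fTM_x p q

lemma eTM_of_B : eTM p q (PresentedGroup.of B) =
    (PresentedGroup.of A : MonGroup p q) ^ p * PresentedGroup.of B := fTM_y p q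

end Iso
end Stmt17
namespace Stmt17
section KDev
variable (p q : ℕ)

inductive Blk : Type
  | X : ℕ → Blk
  | Y : ℕ → Blk
deriving DecidableEq

open Blk

def isX : Blk → Bool | X _ => true | Y _ => false

def wfB : Blk → Prop
  | X e => 1 ≤ e ∧ e ≤ p
  | Y f => 1 ≤ f ∧ f ≤ q

def wf (l : List Blk) : Prop :=
  (∀ b ∈ l, wfB p q b) ∧ l.Chain' (fun b1 b2 => isX b1 ≠ isX b2)

lemma wf_nil : wf p q [] := ⟨by simp, List.isChain_nil⟩

lemma wf_tail {l : List Blk} {b : Blk} (h : wf p q (b :: l)) : wf p q l :=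
  ⟨fun x hx => h.1 x (List.mem_cons_of_mem _ hx), h.2.tail⟩

/-- `headNotX l` iff the head of `l` is not an `X`-block. -/
def headNotX : List Blk → Prop
  | X _ :: _ => False
  | _ => True

lemma headNotX_of_wfX {e : ℕ} {t : List Blk} (h : wf p q (X e :: t)) : headNotX t := by
  cases t with
  | nil => trivial
  | cons b t' =>
    cases b with
    | X e' =>
      exfalso
      have := List.isChain_cons_cons.mp h.2
      exact this.1 rfl
    | Y f => trivial

lemma headNotY_of_wfY {f : ℕ} {t : List Blk} (h : wf p q (Y f :: t)) :
    ∀ f' t', t ≠ Y f' :: t' := by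
  intro f' t' ht
  subst ht
  have := List.isChain_cons_cons.mp h.2
  exact this.1 rfl

/-- number of `Y`-blocks immediately preceded (on the left, i.e. later in the
reversed list) by an `X`-block. -/
def Nc : List Blk → ℕ
  | [] => 0
  | X _ :: t => Nc t
  | Y _ :: [] => 0
  | Y _ :: X e :: t => Nc (X e :: t) + 1
  | Y _ :: Y f :: t => Nc (Y f :: t)

/-! ### the raw operations on `ℤ × List Blk` -/

abbrev K := ℤ × List Blk

def axK : K → K
  | (k, X e :: t) => if e < p then (k, X (e+1) :: t) else (k+1, t)
  | (k, w) => (k, X 1 :: w)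

def ayK : K → K
  | (k, Y f :: t) => if f < q then (k, Y (f+1) :: t) else (k+1, t)
  | (k, w) => (k, Y 1 :: w)

def shiftK (j : ℤ) : K → K := fun n => (n.1 + j, n.2)

def abK : K → K := fun n => shiftK (-1) (ayK q (axK p n))

lemma axK_notX {k : ℤ} {w : List Blk} (h : headNotX w) : axK p (k, w) = (k, X 1 :: w) := by
  cases w with
  | nil => rfl
  | cons b t => cases b with
    | X e => exact absurd h (by simp [headNotX])
    | Y f => rfl

lemma axK_incr {k : ℤ} {e : ℕ} {t : List Blk} (h : e < p) :
    axK p (k, X e :: t) = (k, X (e+1) :: t) := by simp [axK, h]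

lemma axK_carry {k : ℤ} {t : List Blk} :
    axK p (k, X p :: t) = (k+1, t) := by simp [axK]

lemma ayK_notY {k : ℤ} {w : List Blk} (h : ∀ f t, w ≠ Y f :: t) :
    ayK q (k, w) = (k, Y 1 :: w) := by
  cases w with
  | nil => rfl
  | cons b t => cases b with
    | X e => rfl
    | Y f => exact absurd rfl (h f t)

lemma ayK_incr {k : ℤ} {f : ℕ} {t : List Blk} (h : f < q) :
    ayK q (k, Y f :: t) = (k, Y (f+1) :: t) := by simp [ayK, h]

lemma ayK_carry {k : ℤ} {t : List Blk} :
    ayK q (k, Y q :: t) = (k+1, t) := by simp [ayK]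

/-! ### wf preservation -/

lemma wf_axK (hp : 1 ≤ p) {n : K} (h : wf p q n.2) : wf p q (axK p n).2 := by
  obtain ⟨k, w⟩ := n
  cases w with
  | nil =>
    rw [axK_notX p (by trivial)]
    exact ⟨by intro b hb; simp at hb; subst hb; exact ⟨le_refl 1, hp⟩, by simp [List.Chain']⟩
  | cons b t =>
    cases b with
    | X e =>
      by_cases he : e < p
      · rw [axK_incr p he]
        refine ⟨?_, ?_⟩
        · intro b hb
          rcases List.mem_cons.mp hb with h1 | h2
          · subst h1; exact ⟨by omega, by omega⟩
          · exact h.1 _ (List.mem_cons_of_mem _ h2)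
        · have := h.2
          cases t with
          | nil => simp [List.Chain']
          | cons b' t' =>
            simp only [List.Chain', List.isChain_cons_cons] at this ⊢
            exact ⟨this.1, this.2⟩
      · rw [show axK p (k, X e :: t) = (k+1, t) by simp [axK, he]]
        exact wf_tail p q h
    | Y f =>
      rw [axK_notX p (by trivial)]
      refine ⟨?_, ?_⟩
      · intro b hb
        rcases List.mem_cons.mp hb with h1 | h2
        · subst h1; exact ⟨le_refl 1, hp⟩
        · exact h.1 _ h2
      · rw [List.Chain', List.isChain_cons_cons]
        exact ⟨by simp [isX], h.2⟩

lemma wf_ayK (hq : 1 ≤ q) {n : K} (h : wf p q n.2) : wf p q (ayK q n).2 := by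
  obtain ⟨k, w⟩ := n
  cases w with
  | nil =>
    rw [ayK_notY q (by intro f t hh; simp at hh)]
    exact ⟨by intro b hb; simp at hb; subst hb; exact ⟨le_refl 1, hq⟩, by simp [List.Chain']⟩
  | cons b t =>
    cases b with
    | Y f =>
      by_cases hf : f < q
      · rw [ayK_incr q hf]
        refine ⟨?_, ?_⟩
        · intro b hb
          rcases List.mem_cons.mp hb with h1 | h2
          · subst h1; exact ⟨by omega, by omega⟩
          · exact h.1 _ (List.mem_cons_of_mem _ h2)
        · have := h.2
          cases t with
          | nil => simp [List.Chain']
          | cons b' t' =>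
            simp only [List.Chain', List.isChain_cons_cons] at this ⊢
            exact ⟨this.1, this.2⟩
      · rw [show ayK q (k, Y f :: t) = (k+1, t) by simp [ayK, hf]]
        exact wf_tail p q h
    | X e =>
      rw [ayK_notY q (by intro f t hh; simp at hh)]
      refine ⟨?_, ?_⟩
      · intro b hb
        rcases List.mem_cons.mp hb with h1 | h2
        · subst h1; exact ⟨le_refl 1, hq⟩
        · exact h.1 _ h2
      · rw [List.Chain', List.isChain_cons_cons]
        exact ⟨by simp [isX], h.2⟩

lemma wf_shiftK (j : ℤ) {n : K} (h : wf p q n.2) : wf p q (shiftK j n).2 := h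

lemma shiftK_axK (j : ℤ) (n : K) : axK p (shiftK j n) = shiftK j (axK p n) := by
  obtain ⟨k, w⟩ := n
  cases w with
  | nil => rfl
  | cons b t =>
    cases b with
    | X e =>
      by_cases he : e < p
      · simp [axK, he, shiftK]
      · simp [axK, he, shiftK]; ring
    | Y f => rfl

lemma shiftK_ayK (j : ℤ) (n : K) : ayK q (shiftK j n) = shiftK j (ayK q n) := by
  obtain ⟨k, w⟩ := n
  cases w with
  | nil => rfl
  | cons b t =>
    cases b with
    | Y f =>
      by_cases hf : f < q
      · simp [ayK, hf, shiftK]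
      · simp [ayK, hf, shiftK]; ring
    | X e => rfl

lemma shiftK_shiftK (i j : ℤ) (n : K) : shiftK i (shiftK j n) = shiftK (j + i) n := by
  simp [shiftK]; ring

/-! ### cascades -/

lemma ax_iter_incr : ∀ (j e : ℕ) (k : ℤ) (t : List Blk), e + j ≤ p →
    (axK p)^[j] (k, X e :: t) = (k, X (e+j) :: t) := by
  intro j
  induction j with
  | zero => intro e k t _; simp
  | succ m ih =>
    intro e k t hj
    rw [Function.iterate_succ_apply, axK_incr p (show e < p by omega),
      ih (e+1) k t (by omega), show e + 1 + m = e + (m+1) by omega]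

lemma ax_iter_build {k : ℤ} {t : List Blk} (h : headNotX t) :
    ∀ j, 1 ≤ j → j ≤ p → (axK p)^[j] (k, t) = (k, X j :: t) := by
  intro j h1 h2
  have hj : j = (j - 1) + 1 := by omega
  rw [hj, Function.iterate_add_apply, Function.iterate_one, axK_notX p h,
    ax_iter_incr p (j-1) 1 k _ (by omega), show 1 + (j-1) = j - 1 + 1 by omega]

lemma ax_cascade (hp : 1 ≤ p) {n : K} (h : wf p q n.2) :
    (axK p)^[p+1] n = shiftK 1 n := by
  obtain ⟨k, w⟩ := n
  cases w with
  | nil =>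
    rw [show p + 1 = 1 + p by omega, Function.iterate_add_apply,
      ax_iter_build p (by trivial) p hp (le_refl p), Function.iterate_one, axK_carry]
    rfl
  | cons b t =>
    cases b with
    | X e =>
      have he1 : 1 ≤ e := (h.1 _ (List.mem_cons_self)).1
      have he2 : e ≤ p := (h.1 _ (List.mem_cons_self)).2
      have hsplit : p + 1 = e + 1 + (p - e) := by omega
      rw [hsplit, Function.iterate_add_apply, Function.iterate_add_apply,
        ax_iter_incr p (p - e) e k t (by omega), show e + (p - e) = p by omega,
        Function.iterate_one, axK_carry,
        ax_iter_build p (headNotX_of_wfX p q h) e he1 he2]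
      rfl
    | Y f =>
      rw [show p + 1 = 1 + p by omega, Function.iterate_add_apply,
        ax_iter_build p (by trivial) p hp (le_refl p), Function.iterate_one, axK_carry]
      rfl

lemma ay_iter_incr : ∀ (j f : ℕ) (k : ℤ) (t : List Blk), f + j ≤ q →
    (ayK q)^[j] (k, Y f :: t) = (k, Y (f+j) :: t) := by
  intro j
  induction j with
  | zero => intro f k t _; simp
  | succ m ih =>
    intro f k t hj
    rw [Function.iterate_succ_apply, ayK_incr q (show f < q by omega),
      ih (f+1) k t (by omega), show f + 1 + m = f + (m+1) by omega]

lemma ay_iter_build {k : ℤ} {t : List Blk} (h : ∀ f' t', t ≠ Y f' :: t') :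
    ∀ j, 1 ≤ j → j ≤ q → (ayK q)^[j] (k, t) = (k, Y j :: t) := by
  intro j h1 h2
  have hj : j = (j - 1) + 1 := by omega
  rw [hj, Function.iterate_add_apply, Function.iterate_one, ayK_notY q h,
    ay_iter_incr q (j-1) 1 k _ (by omega), show 1 + (j-1) = j - 1 + 1 by omega]

lemma ay_cascade (hq : 1 ≤ q) {n : K} (h : wf p q n.2) :
    (ayK q)^[q+1] n = shiftK 1 n := by
  obtain ⟨k, w⟩ := n
  cases w with
  | nil =>
    rw [show q + 1 = 1 + q by omega, Function.iterate_add_apply,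
      ay_iter_build q (by intro f t h; exact List.cons_ne_nil _ _ h.symm) q hq (le_refl q),
      Function.iterate_one, ayK_carry]
    rfl
  | cons b t =>
    cases b with
    | Y f =>
      have hf1 : 1 ≤ f := (h.1 _ (List.mem_cons_self)).1
      have hf2 : f ≤ q := (h.1 _ (List.mem_cons_self)).2
      have hsplit : q + 1 = f + 1 + (q - f) := by omega
      rw [hsplit, Function.iterate_add_apply, Function.iterate_add_apply,
        ay_iter_incr q (q - f) f k t (by omega), show f + (q - f) = q by omega,
        Function.iterate_one, ayK_carry,
        ay_iter_build q (headNotY_of_wfY p q h) f hf1 hf2]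
      rfl
    | X e =>
      rw [show q + 1 = 1 + q by omega, Function.iterate_add_apply,
        ay_iter_build q (by intro f t hh; simp at hh) q hq (le_refl q),
        Function.iterate_one, ayK_carry]
      rfl

end KDev
end Stmt17
namespace Stmt17
section KPerm
open Blk
variable (p q : ℕ)

def KW := ℤ × {l : List Blk // wf p q l}

def raw (n : KW p q) : K := (n.1, n.2.1)

lemma KW.ext_raw {n m : KW p q} (h : raw p q n = raw p q m) : n = m := by
  obtain ⟨k, l, hl⟩ := n
  obtain ⟨k2, l2, hl2⟩ := m
  have h1 : k = k2 := congrArg Prod.fst h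
  have h2 : l = l2 := congrArg Prod.snd h
  subst h1
  have h3 : (⟨l, hl⟩ : {l : List Blk // wf p q l}) = ⟨l2, hl2⟩ := Subtype.ext h2
  rw [h3]

def liftF (f : K → K) (hf : ∀ n : K, wf p q n.2 → wf p q (f n).2) : KW p q → KW p q :=
  fun n => ((f (raw p q n)).1, ⟨(f (raw p q n)).2, hf _ n.2.2⟩)

lemma raw_liftF (f : K → K) (hf : ∀ n : K, wf p q n.2 → wf p q (f n).2) (n : KW p q) :
    raw p q (liftF p q f hf n) = f (raw p q n) := rfl

lemma wf_axK_iter (hp : 1 ≤ p) (j : ℕ) {n : K} (h : wf p q n.2) :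
    wf p q ((axK p)^[j] n).2 := by
  induction j generalizing n with
  | zero => exact h
  | succ m ih => rw [Function.iterate_succ_apply]; exact ih (wf_axK p q hp h)

lemma wf_ayK_iter (hq : 1 ≤ q) (j : ℕ) {n : K} (h : wf p q n.2) :
    wf p q ((ayK q)^[j] n).2 := by
  induction j generalizing n with
  | zero => exact h
  | succ m ih => rw [Function.iterate_succ_apply]; exact ih (wf_ayK p q hq h)

variable (hp : 1 ≤ p) (hq : 1 ≤ q)

def axE : Equiv.Perm (KW p q) where
  toFun := liftF p q (axK p) (fun _ h => wf_axK p q hp h)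
  invFun := liftF p q (fun n => shiftK (-1) ((axK p)^[p] n))
    (fun n h => wf_shiftK p q (-1) (wf_axK_iter p q hp p h))
  left_inv := by
    intro n
    apply KW.ext_raw
    rw [raw_liftF, raw_liftF]
    have h1 : (axK p)^[p] (axK p (raw p q n)) = (axK p)^[p+1] (raw p q n) :=
      (Function.iterate_succ_apply (axK p) p (raw p q n)).symm
    rw [h1, ax_cascade p q hp n.2.2, shiftK_shiftK]
    simp [shiftK]
  right_inv := by
    intro n
    apply KW.ext_raw
    rw [raw_liftF, raw_liftF]
    rw [shiftK_axK]
    have h1 : axK p ((axK p)^[p] (raw p q n)) = (axK p)^[p+1] (raw p q n) :=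
      (Function.iterate_succ_apply' (axK p) p (raw p q n)).symm
    rw [h1, ax_cascade p q hp n.2.2, shiftK_shiftK]
    simp [shiftK]

def ayE : Equiv.Perm (KW p q) where
  toFun := liftF p q (ayK q) (fun _ h => wf_ayK p q hq h)
  invFun := liftF p q (fun n => shiftK (-1) ((ayK q)^[q] n))
    (fun n h => wf_shiftK p q (-1) (wf_ayK_iter p q hq q h))
  left_inv := by
    intro n
    apply KW.ext_raw
    rw [raw_liftF, raw_liftF]
    have h1 : (ayK q)^[q] (ayK q (raw p q n)) = (ayK q)^[q+1] (raw p q n) :=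
      (Function.iterate_succ_apply (ayK q) q (raw p q n)).symm
    rw [h1, ay_cascade p q hq n.2.2, shiftK_shiftK]
    simp [shiftK]
  right_inv := by
    intro n
    apply KW.ext_raw
    rw [raw_liftF, raw_liftF]
    rw [shiftK_ayK]
    have h1 : ayK q ((ayK q)^[q] (raw p q n)) = (ayK q)^[q+1] (raw p q n) :=
      (Function.iterate_succ_apply' (ayK q) q (raw p q n)).symm
    rw [h1, ay_cascade p q hq n.2.2, shiftK_shiftK]
    simp [shiftK]

def SH (j : ℤ) : Equiv.Perm (KW p q) where
  toFun := liftF p q (shiftK j) (fun _ h => wf_shiftK p q j h)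
  invFun := liftF p q (shiftK (-j)) (fun _ h => wf_shiftK p q (-j) h)
  left_inv := by
    intro n; apply KW.ext_raw; rw [raw_liftF, raw_liftF, shiftK_shiftK]; simp [shiftK]
  right_inv := by
    intro n; apply KW.ext_raw; rw [raw_liftF, raw_liftF, shiftK_shiftK]; simp [shiftK]

lemma raw_axE (n : KW p q) : raw p q (axE p q hp n) = axK p (raw p q n) := rfl
lemma raw_ayE (n : KW p q) : raw p q (ayE p q hq n) = ayK q (raw p q n) := rfl
lemma raw_SH (j : ℤ) (n : KW p q) : raw p q (SH p q j n) = shiftK j (raw p q n) := rfl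

lemma axE_pow (m : ℕ) (n : KW p q) :
    raw p q ((axE p q hp ^ m) n) = (axK p)^[m] (raw p q n) := by
  induction m generalizing n with
  | zero => simp
  | succ j ih =>
    rw [pow_succ, Equiv.Perm.mul_apply, ih, raw_axE, Function.iterate_succ_apply]

lemma ayE_pow (m : ℕ) (n : KW p q) :
    raw p q ((ayE p q hq ^ m) n) = (ayK q)^[m] (raw p q n) := by
  induction m generalizing n with
  | zero => simp
  | succ j ih =>
    rw [pow_succ, Equiv.Perm.mul_apply, ih, raw_ayE, Function.iterate_succ_apply]

lemma axE_cascade : (axE p q hp)^(p+1) = SH p q 1 := by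
  apply Equiv.ext
  intro n
  apply KW.ext_raw
  rw [axE_pow, raw_SH, ax_cascade p q hp n.2.2]

lemma ayE_cascade : (ayE p q hq)^(q+1) = SH p q 1 := by
  apply Equiv.ext
  intro n
  apply KW.ext_raw
  rw [ayE_pow, raw_SH, ay_cascade p q hq n.2.2]

lemma SH_add (i j : ℤ) : SH p q i * SH p q j = SH p q (i + j) := by
  apply Equiv.ext
  intro n
  apply KW.ext_raw
  rw [Equiv.Perm.mul_apply, raw_SH, raw_SH, raw_SH, shiftK_shiftK, Int.add_comm j i]

lemma SH_zero : SH p q 0 = 1 := by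
  apply Equiv.ext
  intro n
  apply KW.ext_raw
  rw [raw_SH]
  simp [shiftK]

lemma SH_zpow (j : ℤ) : (SH p q 1)^j = SH p q j := by
  induction j using Int.induction_on with
  | zero => rw [zpow_zero, SH_zero]
  | succ i ih => rw [zpow_add_one, ih, SH_add]
  | pred i ih =>
    rw [zpow_sub_one, ih]
    have : SH p q (-i - 1) * SH p q 1 = SH p q (-i) := by
      rw [SH_add]; congr 1; ring
    calc SH p q (-i) * (SH p q 1)⁻¹ = SH p q (-i - 1) * SH p q 1 * (SH p q 1)⁻¹ := by rw [this]
      _ = SH p q (-i - 1) := by rw [mul_assoc, mul_inv_cancel, mul_one]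

end KPerm
end Stmt17
namespace Stmt17
section Rho
open Blk
variable (p q : ℕ) (hp : 1 ≤ p) (hq : 1 ≤ q)

def FP : Bool → Equiv.Perm (KW p q) := fun α =>
  if α then (axE p q hp)⁻¹ else (ayE p q hq)⁻¹

lemma FP_rel : ∀ r ∈ ({FreeGroup.of A ^ (p + 1) * (FreeGroup.of B ^ (q + 1))⁻¹} :
    Set (FreeGroup Bool)), FreeGroup.lift (FP p q hp hq) r = 1 := by
  intro r hr
  rw [Set.mem_singleton_iff.mp hr]
  rw [map_mul, map_inv, map_pow, map_pow, FreeGroup.lift_apply_of, FreeGroup.lift_apply_of]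
  show ((axE p q hp)⁻¹)^(p+1) * (((ayE p q hq)⁻¹)^(q+1))⁻¹ = 1
  rw [inv_pow, inv_pow, inv_inv, axE_cascade, ayE_cascade, inv_mul_cancel]

def rho : TorusGroup p q →* Equiv.Perm (KW p q) :=
  PresentedGroup.toGroup (FP_rel p q hp hq)

/-- right action of the torus group on normal forms -/
def sm (g : TorusGroup p q) (n : KW p q) : KW p q := ((rho p q hp hq g)⁻¹ : Equiv.Perm _) n

lemma sm_one (n : KW p q) : sm p q hp hq 1 n = n := by
  simp [sm]

lemma sm_mul (g h : TorusGroup p q) (n : KW p q) :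
    sm p q hp hq (g * h) n = sm p q hp hq h (sm p q hp hq g n) := by
  simp [sm, map_mul]

lemma rho_x : rho p q hp hq (xT p q) = (axE p q hp)⁻¹ :=
  PresentedGroup.toGroup.of (FP_rel p q hp hq)

lemma rho_y : rho p q hp hq (yT p q) = (ayE p q hq)⁻¹ :=
  PresentedGroup.toGroup.of (FP_rel p q hp hq)

lemma sm_x (n : KW p q) : sm p q hp hq (xT p q) n = axE p q hp n := by
  rw [sm, rho_x, inv_inv]

lemma sm_y (n : KW p q) : sm p q hp hq (yT p q) n = ayE p q hq n := by
  rw [sm, rho_y, inv_inv]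

lemma sm_xpow (e : ℕ) (n : KW p q) :
    sm p q hp hq ((xT p q)^e) n = ((axE p q hp)^e) n := by
  rw [sm, map_pow, rho_x, inv_pow, inv_inv]

lemma sm_ypow (f : ℕ) (n : KW p q) :
    sm p q hp hq ((yT p q)^f) n = ((ayE p q hq)^f) n := by
  rw [sm, map_pow, rho_y, inv_pow, inv_inv]

lemma rho_cT : rho p q hp hq (cT p q) = (SH p q 1)⁻¹ := by
  rw [cT, map_pow, rho_x, inv_pow, axE_cascade]

lemma sm_cT_zpow (j : ℤ) (n : KW p q) :
    sm p q hp hq ((cT p q)^j) n = SH p q j n := by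
  rw [sm, map_zpow, rho_cT, inv_zpow, inv_inv, SH_zpow]

/-! ### the product map and injectivity -/

def prodW : List Blk → TorusGroup p q
  | [] => 1
  | X e :: t => prodW t * (xT p q)^e
  | Y f :: t => prodW t * (yT p q)^f

def piK (n : K) : TorusGroup p q := prodW p q n.2 * (cT p q)^n.1

lemma commc (g : TorusGroup p q) (j : ℤ) : (cT p q)^j * g = g * (cT p q)^j := by
  have hcomm : Commute g (cT p q) := ((cT_central p q g)).symm
  exact (hcomm.zpow_right j).eq.symm

lemma mulc_right (u g : TorusGroup p q) (k : ℤ) :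
    u * (cT p q)^k * g = u * g * (cT p q)^k := by
  rw [mul_assoc, mul_assoc, commc]

def epsW : KW p q := ((0 : ℤ), ⟨[], wf_nil p q⟩)

lemma vdW : ∀ (l : List Blk) (hl : wf p q l) (k : ℤ),
    sm p q hp hq (piK p q (k, l)) (epsW p q) = (k, ⟨l, hl⟩) := by
  intro l
  induction l with
  | nil =>
    intro hl k
    have h1 : piK p q (k, ([] : List Blk)) = (cT p q)^k := by
      simp [piK, prodW]
    rw [h1, sm_cT_zpow]
    apply KW.ext_raw
    rw [raw_SH]
    simp [raw, epsW, shiftK]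
  | cons b t ih =>
    intro hl k
    cases b with
    | X e =>
      have he1 : 1 ≤ e := (hl.1 _ (List.mem_cons_self)).1
      have he2 : e ≤ p := (hl.1 _ (List.mem_cons_self)).2
      have h1 : piK p q (k, X e :: t) = piK p q (k, t) * (xT p q)^e := by
        show prodW p q t * (xT p q)^e * (cT p q)^k = prodW p q t * (cT p q)^k * (xT p q)^e
        rw [mul_assoc, mul_assoc, commc]
      rw [h1, sm_mul, ih (wf_tail p q hl) k]
      erw [sm_xpow]
      apply KW.ext_raw
      erw [axE_pow]
      show (axK p)^[e] (k, t) = (k, X e :: t)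
      exact ax_iter_build p (headNotX_of_wfX p q hl) e he1 he2
    | Y f =>
      have hf1 : 1 ≤ f := (hl.1 _ (List.mem_cons_self)).1
      have hf2 : f ≤ q := (hl.1 _ (List.mem_cons_self)).2
      have h1 : piK p q (k, Y f :: t) = piK p q (k, t) * (yT p q)^f := by
        show prodW p q t * (yT p q)^f * (cT p q)^k = prodW p q t * (cT p q)^k * (yT p q)^f
        rw [mul_assoc, mul_assoc, commc]
      rw [h1, sm_mul, ih (wf_tail p q hl) k]
      erw [sm_ypow]
      apply KW.ext_raw
      erw [ayE_pow]
      show (ayK q)^[f] (k, t) = (k, Y f :: t)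
      exact ay_iter_build q (headNotY_of_wfY p q hl) f hf1 hf2

include hp hq in
lemma piK_inj {n m : K} (hn : wf p q n.2) (hm : wf p q m.2) (h : piK p q n = piK p q m) :
    n = m := by
  obtain ⟨k, l⟩ := n
  obtain ⟨k2, l2⟩ := m
  have h1 := vdW p q hp hq l hn k
  have h2 := vdW p q hp hq l2 hm k2
  rw [h] at h1
  rw [h1] at h2
  have h3 : k = k2 := congrArg Prod.fst h2
  have h4 : l = l2 := congrArg (fun z => (Prod.snd z : {l : List Blk // wf p q l}).1) h2
  rw [h3, h4]

/-! ### compatibility of the raw operations with π -/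

lemma pi_shift (j : ℤ) (n : K) : piK p q (shiftK j n) = piK p q n * (cT p q)^j := by
  show prodW p q n.2 * (cT p q)^(n.1 + j) = prodW p q n.2 * (cT p q)^n.1 * (cT p q)^j
  rw [mul_assoc, ← zpow_add]

lemma pi_ax {n : K} (h : wf p q n.2) : piK p q (axK p n) = piK p q n * xT p q := by
  obtain ⟨k, w⟩ := n
  have key : ∀ (w' : List Blk), prodW p q w' * (cT p q)^k * xT p q
      = prodW p q w' * xT p q * (cT p q)^k := by
    intro w'; rw [mul_assoc, commc, ← mul_assoc]
  cases w with
  | nil =>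
    rw [axK_notX p (by trivial)]
    show prodW p q [] * (xT p q)^1 * (cT p q)^k = prodW p q [] * (cT p q)^k * xT p q
    rw [mulc_right, pow_one]
  | cons b t =>
    cases b with
    | X e =>
      by_cases he : e < p
      · rw [axK_incr p he]
        show prodW p q t * (xT p q)^(e+1) * (cT p q)^k
          = prodW p q t * (xT p q)^e * (cT p q)^k * xT p q
        rw [mulc_right, pow_succ, ← mul_assoc (prodW p q t) ((xT p q)^e) (xT p q)]
      · have he' : e = p := by
          have := (h.1 _ (List.mem_cons_self)).2
          omega
        rw [show axK p (k, X e :: t) = (k+1, t) from by simp [axK, he]]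
        show prodW p q t * (cT p q)^(k+1) = prodW p q t * (xT p q)^e * (cT p q)^k * xT p q
        rw [he']
        rw [mulc_right, mul_assoc (prodW p q t), ← pow_succ]
        show prodW p q t * (cT p q)^(k+1) = prodW p q t * (cT p q) * (cT p q)^k
        rw [mul_assoc, ← zpow_one_add, Int.add_comm 1 k]
    | Y f =>
      rw [axK_notX p (by trivial)]
      show prodW p q (Y f :: t) * (xT p q)^1 * (cT p q)^k
        = prodW p q (Y f :: t) * (cT p q)^k * xT p q
      rw [mulc_right, pow_one]

lemma pi_ay {n : K} (h : wf p q n.2) : piK p q (ayK q n) = piK p q n * yT p q := by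
  obtain ⟨k, w⟩ := n
  have key : ∀ (w' : List Blk), prodW p q w' * (cT p q)^k * yT p q
      = prodW p q w' * yT p q * (cT p q)^k := by
    intro w'; rw [mul_assoc, commc, ← mul_assoc]
  cases w with
  | nil =>
    rw [ayK_notY q (by intro f t hh; simp at hh)]
    show prodW p q [] * (yT p q)^1 * (cT p q)^k = prodW p q [] * (cT p q)^k * yT p q
    rw [mulc_right, pow_one]
  | cons b t =>
    cases b with
    | Y f =>
      by_cases hf : f < q
      · rw [ayK_incr q hf]
        show prodW p q t * (yT p q)^(f+1) * (cT p q)^k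
          = prodW p q t * (yT p q)^f * (cT p q)^k * yT p q
        rw [mulc_right, pow_succ, ← mul_assoc (prodW p q t) ((yT p q)^f) (yT p q)]
      · have hf' : f = q := by
          have := (h.1 _ (List.mem_cons_self)).2
          omega
        rw [show ayK q (k, Y f :: t) = (k+1, t) from by simp [ayK, hf]]
        show prodW p q t * (cT p q)^(k+1) = prodW p q t * (yT p q)^f * (cT p q)^k * yT p q
        rw [hf']
        rw [mulc_right, mul_assoc (prodW p q t), ← pow_succ, ← torus_rel]
        show prodW p q t * (cT p q)^(k+1) = prodW p q t * (cT p q) * (cT p q)^k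
        rw [mul_assoc, ← zpow_one_add, Int.add_comm 1 k]
    | X e =>
      rw [ayK_notY q (by intro f t hh; simp at hh)]
      show prodW p q (X e :: t) * (yT p q)^1 * (cT p q)^k
        = prodW p q (X e :: t) * (cT p q)^k * yT p q
      rw [mulc_right, pow_one]

include hp hq in
lemma pi_ab {n : K} (h : wf p q n.2) :
    piK p q (abK p q n) = piK p q n * (((xT p q)^p)⁻¹ * yT p q) := by
  rw [abK, pi_shift, pi_ay p q (wf_axK p q hp h), pi_ax p q h]
  rw [mul_assoc, mul_assoc]
  congr 1
  have h1 : ((xT p q)^p)⁻¹ = xT p q * (cT p q)^(-1:ℤ) := by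
    rw [zpow_neg, zpow_one]
    show ((xT p q)^p)⁻¹ = xT p q * ((xT p q)^(p+1))⁻¹
    rw [pow_succ, mul_inv_rev, ← mul_assoc, mul_inv_cancel, one_mul]
  show xT p q * (yT p q * (cT p q)^(-1:ℤ)) = ((xT p q)^p)⁻¹ * yT p q
  rw [← commc, ← mul_assoc, h1]

end Rho
end Stmt17
namespace Stmt17
section CW
open Blk
variable (p q : ℕ)

def Pnf (n : K) : Prop := wf p q n.2 ∧ 0 ≤ n.1 + (Nc n.2 : ℤ)

lemma Nc_X (e : ℕ) (t : List Blk) : Nc (X e :: t) = Nc t := by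
  cases t <;> rfl

lemma Nc_Y_shape (f f' : ℕ) (t : List Blk) : Nc (Y f :: t) = Nc (Y f' :: t) := by
  cases t with
  | nil => rfl
  | cons b t' => cases b <;> rfl

lemma Nc_YX (f e : ℕ) (t : List Blk) : Nc (Y f :: X e :: t) = Nc t + 1 := by
  show Nc (X e :: t) + 1 = Nc t + 1
  rw [Nc_X]

/-- if the budget needs `Nc ≥ 1` at a `Y`-headed word, the tail starts with `X` -/
lemma shape_of_neg {k : ℤ} {f : ℕ} {t : List Blk} (h : Pnf p q (k, Y f :: t)) (hk : k < 0) :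
    ∃ e t', t = X e :: t' := by
  cases t with
  | nil =>
    exfalso
    have := h.2
    simp [Nc] at this
    omega
  | cons b t' =>
    cases b with
    | X e => exact ⟨e, t', rfl⟩
    | Y f' =>
      exfalso
      exact headNotY_of_wfY p q h.1 f' t' rfl

/-- the canonical positive word representing `c^k · w` (when `Pnf (k,w)`) -/
def cw : ℤ → List Blk → List Bool
  | k, [] => repA ((p+1) * k.toNat)
  | k, X e :: t => cw k t ++ repA e
  | k, Y f :: X e :: t' =>
      if 0 ≤ k then cw k (X e :: t') ++ Ypow p f
      else cw (k+1) t' ++ (repA (e-1) ++ [B] ++ Ypow p (f-1))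
  | k, Y f :: t => cw k t ++ Ypow p f

lemma cw_nil (k : ℤ) : cw p k [] = repA ((p+1) * k.toNat) := by simp [cw]

lemma cw_X (k : ℤ) (e : ℕ) (t : List Blk) : cw p k (X e :: t) = cw p k t ++ repA e := by
  simp [cw]

lemma cw_YX_pos {k : ℤ} (hk : 0 ≤ k) (f e : ℕ) (t' : List Blk) :
    cw p k (Y f :: X e :: t') = cw p k (X e :: t') ++ Ypow p f := by
  simp [cw, hk]

lemma cw_YX_neg {k : ℤ} (hk : ¬ 0 ≤ k) (f e : ℕ) (t' : List Blk) :
    cw p k (Y f :: X e :: t') = cw p (k+1) t' ++ (repA (e-1) ++ [B] ++ Ypow p (f-1)) := by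
  simp [cw, hk]

lemma cw_Ynil (k : ℤ) (f : ℕ) : cw p k [Y f] = cw p k [] ++ Ypow p f := by
  simp [cw]

lemma cw_Y_nonneg {k : ℤ} (hk : 0 ≤ k) (f : ℕ) (t : List Blk) :
    cw p k (Y f :: t) = cw p k t ++ Ypow p f := by
  cases t with
  | nil => exact cw_Ynil p k f
  | cons b t' =>
    cases b with
    | X e => exact cw_YX_pos p hk f e t'
    | Y f' => simp [cw]

end CW
end Stmt17
namespace Stmt17
section Cong
open Blk
variable (p q : ℕ)

lemma cls_B : cls p q [B] = bM p q := rfl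

lemma cM_comm (g : M17 p q) : cM p q * g = g * cM p q := (c_central p q g).symm

lemma mulcM_right (u g : M17 p q) : u * cM p q * g = u * g * cM p q := by
  rw [mul_assoc, cM_comm, mul_assoc]

lemma spendId (e' f' : ℕ) : (aM p q)^e' * bM p q * (yM p q)^f' * cM p q
    = (aM p q)^(e'+1) * (yM p q)^(f'+1) := by
  rw [mul_assoc ((aM p q)^e' * bM p q), ← cM_comm, ← mul_assoc, mul_assoc ((aM p q)^e'),
    b_mul_c, ← mul_assoc, ← pow_succ, mul_assoc, ← pow_succ']

lemma C1nil {k : ℤ} (hk : 0 ≤ k) :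
    cls p q (cw p (k+1) []) = cls p q (cw p k []) * cM p q := by
  rw [cw_nil, cw_nil, cls_repA, cls_repA]
  show _ = _ * (aM p q)^(p+1)
  rw [← pow_add]
  congr 1
  have h2 : (k+1).toNat = k.toNat + 1 := by omega
  rw [h2]
  ring

lemma C1aux : ∀ (L : ℕ) (w : List Blk), w.length ≤ L → ∀ k : ℤ, Pnf p q (k, w) →
    cls p q (cw p (k+1) w) = cls p q (cw p k w) * cM p q := by
  intro L
  induction L with
  | zero =>
    intro w hw k hpn
    have hnil : w = [] := List.eq_nil_of_length_eq_zero (by omega)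
    subst hnil
    exact C1nil p q (by have := hpn.2; simpa [Nc] using this)
  | succ L ih =>
    intro w hw k hpn
    match w with
    | [] => exact C1nil p q (by have := hpn.2; simpa [Nc] using this)
    | X e :: t =>
      have hP : Pnf p q (k, t) := ⟨wf_tail p q hpn.1, by
        have := hpn.2; rwa [Nc_X] at this⟩
      rw [cw_X, cw_X, cls_append, cls_append, ih t (by simp at hw; omega) k hP,
        mul_assoc, mul_assoc]
      congr 1
      exact cM_comm p q _
    | Y f :: t =>
      by_cases hk : 0 ≤ k
      · rw [cw_Y_nonneg p hk, cw_Y_nonneg p (by omega : (0:ℤ) ≤ k+1)]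
        have hP : Pnf p q (k, t) := ⟨wf_tail p q hpn.1, by positivity⟩
        rw [cls_append, cls_append, ih t (by simp at hw; omega) k hP, mul_assoc, mul_assoc]
        congr 1
        exact cM_comm p q _
      · obtain ⟨e, t', rfl⟩ := shape_of_neg p q hpn (by omega)
        have hwf := hpn.1
        have he1 : 1 ≤ e := (hwf.1 (X e) (by simp)).1
        have hf1 : 1 ≤ f := (hwf.1 (Y f) (by simp)).1
        have hPt' : Pnf p q (k+1, t') := by
          refine ⟨wf_tail p q (wf_tail p q hwf), ?_⟩
          have := hpn.2
          rw [Nc_YX] at this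
          push_cast at this ⊢
          omega
        rw [cw_YX_neg p hk]
        by_cases hk1 : 0 ≤ k + 1
        · have hk' : k = -1 := by omega
          subst hk'
          have key : (aM p q)^e * (yM p q)^f
              = (aM p q)^(e-1) * bM p q * (yM p q)^(f-1) * cM p q := by
            rw [spendId, show e-1+1 = e from by omega, show f-1+1 = f from by omega]
          rw [show (-1 : ℤ) + 1 = 0 from by norm_num, cw_YX_pos p (le_refl (0:ℤ)), cw_X]
          simp only [cls_append, cls_repA, cls_Ypow, cls_B, mul_assoc]
          congr 1
          rw [key]
          simp only [mul_assoc]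
        · have hk2 : ¬ (0:ℤ) ≤ k + 1 := by omega
          rw [cw_YX_neg p hk2]
          simp only [cls_append]
          rw [ih t' (by simp at hw; omega) (k+1) hPt']
          simp only [mul_assoc]
          congr 1
          rw [cM_comm]
          simp only [mul_assoc]

lemma C1' (w : List Blk) (k : ℤ) (h : Pnf p q (k, w)) :
    cls p q (cw p (k+1) w) = cls p q (cw p k w) * cM p q :=
  C1aux p q w.length w le_rfl k h

lemma Ta {n : K} (h : Pnf p q n) :
    cls p q (cw p (axK p n).1 (axK p n).2) = cls p q (cw p n.1 n.2) * aM p q := by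
  obtain ⟨k, w⟩ := n
  cases w with
  | nil =>
    rw [axK_notX p (by trivial)]
    show cls p q (cw p k [X 1]) = cls p q (cw p k []) * aM p q
    rw [cw_X, cls_append, cls_repA, pow_one]
  | cons b t =>
    cases b with
    | X e =>
      by_cases he : e < p
      · rw [axK_incr p he]
        show cls p q (cw p k (X (e+1) :: t)) = cls p q (cw p k (X e :: t)) * aM p q
        rw [cw_X, cw_X, cls_append, cls_append, cls_repA, cls_repA, pow_succ, ← mul_assoc]
      · have he' : e = p := by
          have := (h.1.1 _ (List.mem_cons_self)).2
          omega
        rw [show axK p (k, X e :: t) = (k+1, t) from by simp [axK, he]]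
        show cls p q (cw p (k+1) t) = cls p q (cw p k (X e :: t)) * aM p q
        have hP : Pnf p q (k, t) := ⟨wf_tail p q h.1, by
          have := h.2; rwa [Nc_X] at this⟩
        rw [cw_X, cls_append, cls_repA, mul_assoc, ← pow_succ, he']
        exact C1' p q t k hP
    | Y f =>
      rw [axK_notX p (by trivial)]
      show cls p q (cw p k (X 1 :: Y f :: t)) = cls p q (cw p k (Y f :: t)) * aM p q
      rw [cw_X, cls_append, cls_repA, pow_one]

end Cong
end Stmt17
namespace Stmt17
section TbSec
open Blk
variable (p q : ℕ)

lemma ayc (e : ℕ) : (aM p q)^(e+1) * yM p q = cM p q * ((aM p q)^e * bM p q) := by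
  rw [pow_succ, mul_assoc, a_mul_y, ← mul_assoc, ← cM_comm, mul_assoc]

lemma TbAux (t0 : List Blk) (e : ℕ) (k : ℤ) (hwt : wf p q t0) :
    cls p q (cw p (k-1) (Y 1 :: X (e+1) :: t0)) = cls p q (cw p k t0) * ((aM p q)^e * bM p q) := by
  by_cases hk1 : 0 ≤ k - 1
  · rw [cw_YX_pos p hk1, cw_X]
    have hC := C1' p q t0 (k-1) ⟨hwt, by
      have h0 : (0:ℤ) ≤ (Nc t0 : ℤ) := by positivity
      omega⟩
    rw [show k - 1 + 1 = k from by ring] at hC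
    rw [hC]
    simp only [cls_append, cls_repA, cls_Ypow, mul_assoc, pow_one]
    congr 1
    exact ayc p q e
  · rw [cw_YX_neg p hk1, show k - 1 + 1 = k from by ring]
    simp only [cls_append, cls_repA, cls_Ypow, cls_B, mul_assoc, Nat.add_sub_cancel,
      Nat.sub_self, pow_zero, mul_one, one_mul]

lemma Tb (hq1 : 1 ≤ q) {n : K} (h : Pnf p q n) :
    cls p q (cw p (abK p q n).1 (abK p q n).2) = cls p q (cw p n.1 n.2) * bM p q := by
  obtain ⟨k, w⟩ := n
  cases w with
  | nil =>
    have hab : abK p q (k, ([]:List Blk)) = (k - 1, [Y 1, X 1]) := by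
      rw [abK, axK_notX p (by trivial), ayK_notY q (by intro f t hh; simp at hh)]
      simp [shiftK, Prod.ext_iff]
      ring
    rw [hab]
    show cls p q (cw p (k-1) (Y 1 :: X (0+1) :: ([]:List Blk))) = cls p q (cw p k []) * bM p q
    rw [TbAux p q [] 0 k (wf_nil p q), pow_zero, one_mul]
  | cons b t =>
    cases b with
    | X e =>
      by_cases he : e < p
      · have hab : abK p q (k, X e :: t) = (k - 1, Y 1 :: X (e+1) :: t) := by
          rw [abK, axK_incr p he, ayK_notY q (by intro f t' hh; simp at hh)]
          simp [shiftK, Prod.ext_iff]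
          ring
        rw [hab]
        show cls p q (cw p (k-1) (Y 1 :: X (e+1) :: t)) = cls p q (cw p k (X e :: t)) * bM p q
        rw [TbAux p q t e k (wf_tail p q h.1), cw_X, cls_append, cls_repA, mul_assoc]
      · have he' : e = p := by
          have := (h.1.1 _ (List.mem_cons_self)).2
          omega
        cases t with
        | nil =>
          have hk0 : 0 ≤ k := by
            have := h.2
            simpa [Nc] using this
          have hab : abK p q (k, [X e]) = (k, [Y 1]) := by
            rw [abK, show axK p (k, [X e]) = (k+1, []) from by simp [axK, he],
              ayK_notY q (by intro f t hh; simp at hh)]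
            simp [shiftK, Prod.ext_iff]
          rw [hab]
          show cls p q (cw p k [Y 1]) = cls p q (cw p k [X e]) * bM p q
          rw [cw_Ynil, cw_X]
          simp only [cls_append, cls_repA, cls_Ypow, mul_assoc, pow_one]
          rw [he', ← yM_eq]
        | cons b2 t1 =>
          cases b2 with
          | X e2 =>
            exact absurd (headNotX_of_wfX p q h.1) (by simp [headNotX])
          | Y f =>
            have hf1 : 1 ≤ f := (h.1.1 (Y f) (by simp)).1
            by_cases hf : f < q
            · have hab : abK p q (k, X e :: Y f :: t1) = (k, Y (f+1) :: t1) := by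
                rw [abK, show axK p (k, X e :: Y f :: t1) = (k+1, Y f :: t1) from by
                  simp [axK, he], ayK_incr q hf]
                simp [shiftK, Prod.ext_iff]
              rw [hab]
              by_cases hk0 : 0 ≤ k
              · show cls p q (cw p k (Y (f+1) :: t1)) = cls p q (cw p k (X e :: Y f :: t1)) * bM p q
                rw [cw_Y_nonneg p hk0, cw_X, cw_Y_nonneg p hk0]
                simp only [cls_append, cls_repA, cls_Ypow, mul_assoc]
                rw [he', ← yM_eq, ← pow_succ]
              · have hsh : ∃ e2 t2, t1 = X e2 :: t2 := by
                  apply shape_of_neg p q (k := k) (f := f)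
                  · exact ⟨wf_tail p q h.1, by have := h.2; rwa [Nc_X] at this⟩
                  · omega
                obtain ⟨e2, t2, rfl⟩ := hsh
                have he21 : 1 ≤ e2 := ((wf_tail p q (wf_tail p q h.1)).1 (X e2) (by simp)).1
                show cls p q (cw p k (Y (f+1) :: X e2 :: t2))
                  = cls p q (cw p k (X e :: Y f :: X e2 :: t2)) * bM p q
                rw [cw_YX_neg p hk0, cw_X, cw_YX_neg p hk0]
                simp only [cls_append, cls_repA, cls_Ypow, cls_B, mul_assoc, Nat.add_sub_cancel]
                rw [he', ← yM_eq, ← pow_succ, show f - 1 + 1 = f from by omega]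
            · have hf' : f = q := by
                have := (h.1.1 (Y f) (by simp)).2
                omega
              have hab : abK p q (k, X e :: Y f :: t1) = (k + 1, t1) := by
                rw [abK, show axK p (k, X e :: Y f :: t1) = (k+1, Y f :: t1) from by
                  simp [axK, he], show ayK q (k+1, Y f :: t1) = (k+2, t1) from by
                  simp [ayK, hf, Prod.ext_iff]; omega]
                simp [shiftK, Prod.ext_iff]
                ring
              rw [hab]
              by_cases hk0 : 0 ≤ k
              · show cls p q (cw p (k+1) t1) = cls p q (cw p k (X e :: Y f :: t1)) * bM p q
                have hP1 : Pnf p q (k, t1) := ⟨wf_tail p q (wf_tail p q h.1), by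
                  have h0 : (0:ℤ) ≤ (Nc t1 : ℤ) := by positivity
                  omega⟩
                rw [C1' p q t1 k hP1, cw_X, cw_Y_nonneg p hk0]
                simp only [cls_append, cls_repA, cls_Ypow, mul_assoc]
                rw [he', ← yM_eq, ← pow_succ, hf', ← cM_eq_ypow]
              · have hsh : ∃ e2 t2, t1 = X e2 :: t2 := by
                  apply shape_of_neg p q (k := k) (f := f)
                  · exact ⟨wf_tail p q h.1, by have := h.2; rwa [Nc_X] at this⟩
                  · omega
                obtain ⟨e2, t2, rfl⟩ := hsh
                have he21 : 1 ≤ e2 := ((wf_tail p q (wf_tail p q h.1)).1 (X e2) (by simp)).1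
                show cls p q (cw p (k+1) (X e2 :: t2))
                  = cls p q (cw p k (X e :: Y f :: X e2 :: t2)) * bM p q
                rw [cw_X, cw_X, cw_YX_neg p hk0]
                simp only [cls_append, cls_repA, cls_Ypow, cls_B, mul_assoc, Nat.add_sub_cancel]
                rw [he', ← yM_eq, ← pow_succ, show f - 1 + 1 = f from by omega, hf', ← rel0,
                  ← pow_succ, show e2 - 1 + 1 = e2 from by omega]
    | Y f =>
      have hab : abK p q (k, Y f :: t) = (k - 1, Y 1 :: X (0+1) :: Y f :: t) := by
        rw [abK, axK_notX p (by trivial), ayK_notY q (by intro f' t' hh; simp at hh)]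
        simp [shiftK, Prod.ext_iff]
        ring
      rw [hab]
      show cls p q (cw p (k-1) (Y 1 :: X (0+1) :: Y f :: t)) = cls p q (cw p k (Y f :: t)) * bM p q
      rw [TbAux p q (Y f :: t) 0 k h.1, pow_zero, one_mul]

end TbSec
end Stmt17
namespace Stmt17
section SFold
open Blk
variable (p q : ℕ)

lemma pw_B : pw p q [B] = ((xT p q)^p)⁻¹ * yT p q := by
  simp [pw, FB]

lemma pw_A : pw p q [A] = xT p q := by
  simp [pw, FB]

lemma xp_inv : ((xT p q)^p)⁻¹ = xT p q * (cT p q)^(-1:ℤ) := by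
  rw [zpow_neg, zpow_one]
  show ((xT p q)^p)⁻¹ = xT p q * ((xT p q)^(p+1))⁻¹
  rw [pow_succ, mul_inv_rev, ← mul_assoc, mul_inv_cancel, one_mul]

lemma Saux : ∀ (L : ℕ) (w : List Blk), w.length ≤ L → ∀ k : ℤ, Pnf p q (k, w) →
    pw p q (cw p k w) = piK p q (k, w) := by
  intro L
  induction L with
  | zero =>
    intro w hw k hpn
    have hnil : w = [] := List.eq_nil_of_length_eq_zero (by omega)
    subst hnil
    have hk : 0 ≤ k := by have := hpn.2; simpa [Nc] using this
    rw [cw_nil, pw_repA, pow_mul]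
    show ((cT p q))^((k.toNat : ℕ)) = piK p q (k, [])
    rw [← zpow_natCast, Int.toNat_of_nonneg hk]
    show (cT p q)^k = prodW p q [] * (cT p q)^k
    rw [show prodW p q [] = 1 from rfl, one_mul]
  | succ L ih =>
    intro w hw k hpn
    match w with
    | [] =>
      have hk : 0 ≤ k := by have := hpn.2; simpa [Nc] using this
      rw [cw_nil, pw_repA, pow_mul, ← zpow_natCast, Int.toNat_of_nonneg hk]
      show (cT p q)^k = prodW p q [] * (cT p q)^k
      rw [show prodW p q [] = 1 from rfl, one_mul]
    | X e :: t =>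
      have hP : Pnf p q (k, t) := ⟨wf_tail p q hpn.1, by
        have := hpn.2; rwa [Nc_X] at this⟩
      rw [cw_X, pw_append, pw_repA, ih t (by simp at hw; omega) k hP]
      show piK p q (k, t) * (xT p q)^e = prodW p q (X e :: t) * (cT p q)^k
      show prodW p q t * (cT p q)^k * (xT p q)^e = prodW p q t * (xT p q)^e * (cT p q)^k
      rw [mulc_right]
    | Y f :: t =>
      by_cases hk : 0 ≤ k
      · have hP : Pnf p q (k, t) := ⟨wf_tail p q hpn.1, by
          have h0 : (0:ℤ) ≤ (Nc t : ℤ) := by positivity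
          omega⟩
        rw [cw_Y_nonneg p hk, pw_append, pw_Ypow, ih t (by simp at hw; omega) k hP]
        show prodW p q t * (cT p q)^k * (yT p q)^f = prodW p q t * (yT p q)^f * (cT p q)^k
        rw [mulc_right]
      · obtain ⟨e, t', rfl⟩ := shape_of_neg p q hpn (by omega)
        have hwf := hpn.1
        have he1 : 1 ≤ e := (hwf.1 (X e) (by simp)).1
        have hf1 : 1 ≤ f := (hwf.1 (Y f) (by simp)).1
        have hPt' : Pnf p q (k+1, t') := by
          refine ⟨wf_tail p q (wf_tail p q hwf), ?_⟩
          have := hpn.2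
          rw [Nc_YX] at this
          push_cast at this ⊢
          omega
        rw [cw_YX_neg p hk]
        rw [pw_append, ih t' (by simp at hw; omega) (k+1) hPt']
        rw [pw_append, pw_append, pw_repA, pw_B, pw_Ypow]
        show prodW p q t' * (cT p q)^(k+1) * ((xT p q)^(e-1) * (((xT p q)^p)⁻¹ * yT p q)
            * (yT p q)^(f-1))
          = prodW p q (Y f :: X e :: t') * (cT p q)^k
        have hb : ((xT p q)^p)⁻¹ * yT p q = xT p q * yT p q * (cT p q)^(-1:ℤ) := by
          rw [xp_inv, mul_assoc (xT p q), commc, ← mul_assoc]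
        have hgather : (xT p q)^(e-1) * (((xT p q)^p)⁻¹ * yT p q) * (yT p q)^(f-1)
            = (xT p q)^e * (yT p q)^f * (cT p q)^(-1:ℤ) := by
          rw [hb, ← mul_assoc, mulc_right,
            ← mul_assoc ((xT p q)^(e-1)) (xT p q) (yT p q), ← pow_succ,
            show e - 1 + 1 = e from by omega, mul_assoc ((xT p q)^e), ← pow_succ',
            show f - 1 + 1 = f from by omega]
        rw [hgather]
        show _ = prodW p q t' * (xT p q)^e * (yT p q)^f * (cT p q)^k
        rw [← mul_assoc, mulc_right, mulc_right,
          mul_assoc (prodW p q t' * ((xT p q)^e * (yT p q)^f)) ((cT p q)^(-1:ℤ)) ((cT p q)^(k+1)),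
          ← zpow_add, show (-1:ℤ) + (k+1) = k from by ring,
          ← mul_assoc (prodW p q t') ((xT p q)^e) ((yT p q)^f)]

lemma S' (w : List Blk) (k : ℤ) (h : Pnf p q (k, w)) :
    phi p q (cls p q (cw p k w)) = piK p q (k, w) := by
  rw [phi_cls]
  exact Saux p q w.length w le_rfl k h

/-! ### folding words into normal forms -/

def stepK (n : K) (α : Bool) : K := if α then axK p n else abK p q n

def nfK (u : List Bool) : K := u.foldl (stepK p q) ((0:ℤ), ([] : List Blk))

variable (hp : 1 ≤ p) (hq : 1 ≤ q)

include hp hq in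
lemma Pnf_ax {n : K} (h : Pnf p q n) : Pnf p q (axK p n) := by
  obtain ⟨k, w⟩ := n
  refine ⟨wf_axK p q hp h.1, ?_⟩
  cases w with
  | nil =>
    rw [axK_notX p (by trivial)]
    have := h.2
    simp [Nc] at this ⊢
    omega
  | cons b t =>
    cases b with
    | X e =>
      by_cases he : e < p
      · rw [axK_incr p he]
        have h2 : (0:ℤ) ≤ k + (Nc (X e :: t) : ℤ) := h.2
        rw [Nc_X] at h2
        show (0:ℤ) ≤ k + (Nc (X (e+1) :: t) : ℤ)
        rw [Nc_X]
        exact h2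
      · rw [show axK p (k, X e :: t) = (k+1, t) from by simp [axK, he]]
        have h2 : (0:ℤ) ≤ k + (Nc (X e :: t) : ℤ) := h.2
        rw [Nc_X] at h2
        show (0:ℤ) ≤ k + 1 + (Nc t : ℤ)
        omega
    | Y f =>
      rw [axK_notX p (by trivial)]
      have h2 : (0:ℤ) ≤ k + (Nc (Y f :: t) : ℤ) := h.2
      show (0:ℤ) ≤ k + (Nc (X 1 :: Y f :: t) : ℤ)
      rw [Nc_X]
      exact h2

include hp hq in
lemma Pnf_ab {n : K} (h : Pnf p q n) : Pnf p q (abK p q n) := by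
  obtain ⟨k, w⟩ := n
  refine ⟨wf_shiftK p q _ (wf_ayK p q hq (wf_axK p q hp h.1)), ?_⟩
  cases w with
  | nil =>
    have hk0 : 0 ≤ k := by have := h.2; simpa [Nc] using this
    have hab : abK p q (k, ([]:List Blk)) = (k - 1, [Y 1, X 1]) := by
      rw [abK, axK_notX p (by trivial), ayK_notY q (by intro f t hh; simp at hh)]
      simp [shiftK, Prod.ext_iff]
      ring
    rw [hab]
    show (0:ℤ) ≤ k - 1 + Nc [Y 1, X 1]
    have : Nc [Y 1, X 1] = 1 := rfl
    rw [this]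
    push_cast
    omega
  | cons b t =>
    cases b with
    | X e =>
      by_cases he : e < p
      · have hab : abK p q (k, X e :: t) = (k - 1, Y 1 :: X (e+1) :: t) := by
          rw [abK, axK_incr p he, ayK_notY q (by intro f t' hh; simp at hh)]
          simp [shiftK, Prod.ext_iff]
          ring
        rw [hab]
        show (0:ℤ) ≤ k - 1 + (Nc (Y 1 :: X (e+1) :: t) : ℤ)
        have h2 : (0:ℤ) ≤ k + (Nc (X e :: t) : ℤ) := h.2
        rw [Nc_X] at h2
        rw [Nc_YX]
        push_cast
        omega
      · cases t with
        | nil =>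
          have hk0 : 0 ≤ k := by
            have := h.2
            simpa [Nc] using this
          have hab : abK p q (k, [X e]) = (k, [Y 1]) := by
            rw [abK, show axK p (k, [X e]) = (k+1, []) from by simp [axK, he],
              ayK_notY q (by intro f t hh; simp at hh)]
            simp [shiftK, Prod.ext_iff]
          rw [hab]
          show (0:ℤ) ≤ k + Nc [Y 1]
          have : Nc [Y 1] = 0 := rfl
          rw [this]
          omega
        | cons b2 t1 =>
          cases b2 with
          | X e2 => exact absurd (headNotX_of_wfX p q h.1) (by simp [headNotX])
          | Y f =>
            by_cases hf : f < q
            · have hab : abK p q (k, X e :: Y f :: t1) = (k, Y (f+1) :: t1) := by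
                rw [abK, show axK p (k, X e :: Y f :: t1) = (k+1, Y f :: t1) from by
                  simp [axK, he], ayK_incr q hf]
                simp [shiftK, Prod.ext_iff]
              rw [hab]
              have h2 : (0:ℤ) ≤ k + (Nc (Y f :: t1) : ℤ) := by
                have h3 : (0:ℤ) ≤ k + (Nc (X e :: Y f :: t1) : ℤ) := h.2
                rwa [Nc_X] at h3
              show (0:ℤ) ≤ k + (Nc (Y (f+1) :: t1) : ℤ)
              rw [Nc_Y_shape (f+1) f t1]
              exact h2
            · have hab : abK p q (k, X e :: Y f :: t1) = (k + 1, t1) := by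
                rw [abK, show axK p (k, X e :: Y f :: t1) = (k+1, Y f :: t1) from by
                  simp [axK, he], show ayK q (k+1, Y f :: t1) = (k+2, t1) from by
                  simp [ayK, hf, Prod.ext_iff]; omega]
                simp [shiftK, Prod.ext_iff]
                ring
              rw [hab]
              have h2 : (0:ℤ) ≤ k + (Nc (Y f :: t1) : ℤ) := by
                have h3 : (0:ℤ) ≤ k + (Nc (X e :: Y f :: t1) : ℤ) := h.2
                rwa [Nc_X] at h3
              show (0:ℤ) ≤ k + 1 + (Nc t1 : ℤ)
              cases t1 with
              | nil =>
                simp [Nc] at h2 ⊢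
                omega
              | cons b3 t2 =>
                cases b3 with
                | X e3 =>
                  rw [Nc_YX] at h2
                  rw [Nc_X]
                  push_cast at h2 ⊢
                  omega
                | Y f3 =>
                  exact absurd rfl (headNotY_of_wfY p q (wf_tail p q h.1) f3 t2)
    | Y f =>
      have hab : abK p q (k, Y f :: t) = (k - 1, Y 1 :: X (0+1) :: Y f :: t) := by
        rw [abK, axK_notX p (by trivial), ayK_notY q (by intro f' t' hh; simp at hh)]
        simp [shiftK, Prod.ext_iff]
        ring
      rw [hab]
      show (0:ℤ) ≤ k - 1 + (Nc (Y 1 :: X (0+1) :: Y f :: t) : ℤ)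
      have h2 : (0:ℤ) ≤ k + (Nc (Y f :: t) : ℤ) := h.2
      rw [Nc_YX]
      push_cast
      omega

include hp hq in
lemma Pnf_fold : ∀ (u : List Bool) (n : K), Pnf p q n → Pnf p q (u.foldl (stepK p q) n) := by
  intro u
  induction u with
  | nil => intro n h; exact h
  | cons α u' ih =>
    intro n h
    show Pnf p q (u'.foldl (stepK p q) (stepK p q n α))
    apply ih
    cases α with
    | true => exact Pnf_ax p q hp hq h
    | false => exact Pnf_ab p q hp hq h

lemma Pnf_eps : Pnf p q ((0:ℤ), ([] : List Blk)) := ⟨wf_nil p q, by simp [Nc]⟩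

include hp hq in
lemma Pnf_nfK (u : List Bool) : Pnf p q (nfK p q u) :=
  Pnf_fold p q hp hq u _ (Pnf_eps p q)

lemma pw_cons (α : Bool) (u : List Bool) : pw p q (α :: u) = FB p q α * pw p q u := by
  simp [pw]

include hp hq in
lemma pi_fold : ∀ (u : List Bool) (n : K), wf p q n.2 →
    piK p q (u.foldl (stepK p q) n) = piK p q n * pw p q u := by
  intro u
  induction u with
  | nil => intro n h; simp [pw]
  | cons α u' ih =>
    intro n h
    show piK p q (u'.foldl (stepK p q) (stepK p q n α)) = _
    have hwfs : wf p q (stepK p q n α).2 := by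
      cases α with
      | true => exact wf_axK p q hp h
      | false => exact wf_shiftK p q _ (wf_ayK p q hq (wf_axK p q hp h))
    rw [ih _ hwfs, pw_cons, ← mul_assoc]
    congr 1
    cases α with
    | true => exact pi_ax p q h
    | false => exact pi_ab p q hp hq h

include hp hq in
lemma pi_nfK (u : List Bool) : piK p q (nfK p q u) = pw p q u := by
  rw [nfK, pi_fold p q hp hq u _ (wf_nil p q)]
  show prodW p q [] * (cT p q)^(0:ℤ) * pw p q u = pw p q u
  rw [show prodW p q [] = 1 from rfl, zpow_zero, one_mul, one_mul]

include hp hq in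
lemma cls_fold : ∀ (u : List Bool) (n : K), Pnf p q n →
    cls p q (cw p (u.foldl (stepK p q) n).1 (u.foldl (stepK p q) n).2)
      = cls p q (cw p n.1 n.2) * cls p q u := by
  intro u
  induction u with
  | nil =>
    intro n h
    show cls p q (cw p n.1 n.2) = _ * cls p q []
    rw [cls_nil, mul_one]
  | cons α u' ih =>
    intro n h
    show cls p q (cw p (List.foldl (stepK p q) (stepK p q n α) u').1
        (List.foldl (stepK p q) (stepK p q n α) u').2)
      = cls p q (cw p n.1 n.2) * cls p q (α :: u')
    have hps : Pnf p q (stepK p q n α) := by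
      cases α with
      | true => exact Pnf_ax p q hp hq h
      | false => exact Pnf_ab p q hp hq h
    rw [ih _ hps]
    have hstep : cls p q (cw p (stepK p q n α).1 (stepK p q n α).2)
        = cls p q (cw p n.1 n.2) * cls p q [α] := by
      cases α with
      | true => exact Ta p q h
      | false => exact Tb p q hq h
    rw [hstep, mul_assoc,
      show cls p q (α::u') = cls p q [α] * cls p q u' from cls_append p q [α] u']

include hp hq in
lemma cls_nfK (u : List Bool) :
    cls p q u = cls p q (cw p (nfK p q u).1 (nfK p q u).2) := by
  rw [nfK, cls_fold p q hp hq u _ (Pnf_eps p q)]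
  show _ = cls p q (cw p 0 []) * cls p q u
  rw [cw_nil]
  show _ = cls p q (repA ((p+1) * (0:ℤ).toNat)) * cls p q u
  rw [show (p+1) * (0:ℤ).toNat = 0 from by simp, show repA 0 = [] from rfl, cls_nil, one_mul]

include hp hq in
lemma phi_inj {g h : M17 p q} (heq : phi p q g = phi p q h) : g = h := by
  obtain ⟨u, rfl⟩ := cls_surjective p q g
  obtain ⟨v, rfl⟩ := cls_surjective p q h
  rw [phi_cls, phi_cls, ← pi_nfK p q hp hq, ← pi_nfK p q hp hq] at heq
  have hnf : nfK p q u = nfK p q v :=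
    piK_inj p q hp hq (Pnf_nfK p q hp hq u).1 (Pnf_nfK p q hp hq v).1 heq
  rw [cls_nfK p q hp hq u, cls_nfK p q hp hq v, hnf]

end SFold
end Stmt17
namespace Stmt17
section InvGap
open Blk
variable (p q : ℕ)

def invB : Blk → Blk
  | X e => X (p+1-e)
  | Y f => Y (q+1-f)

def invW (l : List Blk) : List Blk := (l.map (invB p q)).reverse

def invK (n : K) : K := (-n.1 - n.2.length, invW p q n.2)

lemma isX_invB (b : Blk) : isX (invB p q b) = isX b := by cases b <;> rfl

lemma wf_invW {l : List Blk} (h : wf p q l) : wf p q (invW p q l) := by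
  constructor
  · intro b hb
    rw [invW, List.mem_reverse, List.mem_map] at hb
    obtain ⟨b', hb', rfl⟩ := hb
    have := h.1 b' hb'
    cases b' with
    | X e =>
      obtain ⟨h1, h2⟩ := this
      exact ⟨by omega, by omega⟩
    | Y f =>
      obtain ⟨h1, h2⟩ := this
      exact ⟨by omega, by omega⟩
  · rw [invW]
    rw [List.Chain', List.isChain_reverse]
    apply (List.isChain_map (invB p q)).mpr
    apply List.IsChain.imp _ h.2
    intro a b hab
    show isX (invB p q b) ≠ isX (invB p q a)
    rw [isX_invB, isX_invB]
    exact hab.symm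

lemma prodW_append_X (l : List Blk) (e : ℕ) :
    prodW p q (l ++ [X e]) = (xT p q)^e * prodW p q l := by
  induction l with
  | nil => show prodW p q [] * (xT p q)^e = _; simp [prodW]
  | cons b t ih =>
    cases b with
    | X e' =>
      show prodW p q (t ++ [X e]) * (xT p q)^e' = _
      rw [ih, mul_assoc]
      rfl
    | Y f =>
      show prodW p q (t ++ [X e]) * (yT p q)^f = _
      rw [ih, mul_assoc]
      rfl

lemma prodW_append_Y (l : List Blk) (f : ℕ) :
    prodW p q (l ++ [Y f]) = (yT p q)^f * prodW p q l := by
  induction l with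
  | nil => show prodW p q [] * (yT p q)^f = _; simp [prodW]
  | cons b t ih =>
    cases b with
    | X e' =>
      show prodW p q (t ++ [Y f]) * (xT p q)^e' = _
      rw [ih, mul_assoc]
      rfl
    | Y f' =>
      show prodW p q (t ++ [Y f]) * (yT p q)^f' = _
      rw [ih, mul_assoc]
      rfl

lemma prod_invW : ∀ (l : List Blk), wf p q l →
    prodW p q (invW p q l) = (prodW p q l)⁻¹ * (cT p q)^(l.length : ℤ) := by
  intro l
  induction l with
  | nil => intro _; simp [invW, prodW]
  | cons b t ih =>
    intro h
    have iht := ih (wf_tail p q h)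
    cases b with
    | X e =>
      have hstep : invW p q (X e :: t) = invW p q t ++ [X (p+1-e)] := by
        simp [invW, invB]
      have hx : (xT p q)^(p+1-e) = ((xT p q)^e)⁻¹ * cT p q := by
        have he2 : e ≤ p := (h.1 _ (List.mem_cons_self)).2
        rw [eq_inv_mul_iff_mul_eq, ← pow_add, show e + (p+1-e) = p+1 from by omega]
        rfl
      rw [hstep, prodW_append_X, iht, hx, mul_assoc, cT_central,
        mul_assoc ((prodW p q t)⁻¹), ← zpow_add_one, ← mul_assoc]
      show _ = (prodW p q t * (xT p q)^e)⁻¹ * (cT p q)^(((X e :: t).length : ℕ) : ℤ)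
      rw [mul_inv_rev]
      simp only [List.length_cons, Nat.cast_succ]
    | Y f =>
      have hstep : invW p q (Y f :: t) = invW p q t ++ [Y (q+1-f)] := by
        simp [invW, invB]
      have hy : (yT p q)^(q+1-f) = ((yT p q)^f)⁻¹ * cT p q := by
        have hf2 : f ≤ q := (h.1 _ (List.mem_cons_self)).2
        rw [eq_inv_mul_iff_mul_eq, ← pow_add, show f + (q+1-f) = q+1 from by omega]
        exact (torus_rel p q).symm
      rw [hstep, prodW_append_Y, iht, hy, mul_assoc, cT_central,
        mul_assoc ((prodW p q t)⁻¹), ← zpow_add_one, ← mul_assoc]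
      show _ = (prodW p q t * (yT p q)^f)⁻¹ * (cT p q)^(((Y f :: t).length : ℕ) : ℤ)
      rw [mul_inv_rev]
      simp only [List.length_cons, Nat.cast_succ]

lemma pi_inv {n : K} (h : wf p q n.2) : piK p q (invK p q n) = (piK p q n)⁻¹ := by
  obtain ⟨k, l⟩ := n
  show prodW p q (invW p q l) * (cT p q)^(-k - (l.length:ℤ)) = _
  rw [prod_invW p q l h, mul_assoc, ← zpow_add,
    show (l.length:ℤ) + (-k - l.length) = -k from by ring]
  show _ = (prodW p q l * (cT p q)^k)⁻¹
  rw [mul_inv_rev, ← zpow_neg]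
  rw [commc]

/-! ### counting -/

def cntX (l : List Blk) : ℕ := l.countP (fun b => isX b)
def cntY (l : List Blk) : ℕ := l.countP (fun b => !isX b)

def hY : List Blk → ℕ
  | [] => 0
  | b :: _ => if isX b then 0 else 1

lemma hY_append {l : List Blk} (hl : l ≠ []) (l' : List Blk) : hY (l ++ l') = hY l := by
  cases l with
  | nil => exact absurd rfl hl
  | cons b t => rfl

lemma length_eq_cnt (l : List Blk) : l.length = cntX l + cntY l := by
  induction l with
  | nil => rfl
  | cons b t ih =>
    cases b with
    | X e => simp [cntX, cntY, List.countP_cons, isX] at ih ⊢; omega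
    | Y f => simp [cntX, cntY, List.countP_cons, isX] at ih ⊢; omega

lemma NcEq : ∀ (l : List Blk), wf p q l → Nc l + hY l.reverse = cntY l := by
  intro l
  induction l with
  | nil => intro _; rfl
  | cons b t ih =>
    intro h
    have iht := ih (wf_tail p q h)
    cases b with
    | X e =>
      cases t with
      | nil => rfl
      | cons b2 t2 =>
        have hrev : (X e :: b2 :: t2).reverse = (b2 :: t2).reverse ++ [X e] := by
          simp
        rw [Nc_X, hrev, hY_append (by simp) [X e]]
        have hcnt : cntY (X e :: b2 :: t2) = cntY (b2 :: t2) := by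
          simp [cntY, List.countP_cons, isX]
        rw [hcnt]
        exact iht
    | Y f =>
      cases t with
      | nil => rfl
      | cons b2 t2 =>
        cases b2 with
        | Y f2 => exact absurd rfl (headNotY_of_wfY p q h f2 t2)
        | X e2 =>
          have hrev : (Y f :: X e2 :: t2).reverse = (X e2 :: t2).reverse ++ [Y f] := by
            simp
          rw [Nc_YX, hrev, hY_append (by simp) [Y f]]
          have hcnt : cntY (Y f :: X e2 :: t2) = cntY (X e2 :: t2) + 1 := by
            simp [cntY, List.countP_cons, isX]
          rw [hcnt, ← iht, Nc_X]
          ring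

lemma hY_head_opp {b : Blk} {t : List Blk} (h : wf p q (b :: t)) (ht : t ≠ []) :
    hY t = if isX b then 1 else 0 := by
  cases t with
  | nil => exact absurd rfl ht
  | cons b2 t2 =>
    have := List.isChain_cons_cons.mp h.2
    have hne := this.1
    cases b <;> cases b2 <;> simp [isX, hY] at hne ⊢

lemma alt_count : ∀ (l : List Blk), wf p q l → l ≠ [] →
    cntY l + 1 = cntX l + hY l + hY l.reverse := by
  intro l
  induction l with
  | nil => intro _ h; exact absurd rfl h
  | cons b t ih =>
    intro h _
    cases ht : t with
    | nil =>
      subst ht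
      cases b <;> simp [cntX, cntY, hY, isX, List.countP_cons]
    | cons b2 t2 =>
      have htne : t ≠ [] := by rw [ht]; simp
      rw [← ht]
      have iht := ih (wf_tail p q h) htne
      have hrev : (b :: t).reverse = t.reverse ++ [b] := by simp
      rw [hrev, hY_append (by simp [ht]) [b]]
      have hopp := hY_head_opp p q h htne
      have hcx : cntX (b :: t) = cntX t + (if isX b then 1 else 0) := by
        cases b <;> simp [cntX, List.countP_cons, isX]
      have hcy : cntY (b :: t) = cntY t + (if isX b then 0 else 1) := by
        cases b <;> simp [cntY, List.countP_cons, isX]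
      have hhy : hY (b :: t) = (if isX b then 0 else 1) := rfl
      rw [hcx, hcy, hhy]
      cases b <;> simp [isX] at hopp hcx hcy ⊢ <;> omega

/-! ### the gap lemma -/

lemma countP_rev (pr : Blk → Bool) (l : List Blk) : l.reverse.countP pr = l.countP pr := by
  induction l with
  | nil => rfl
  | cons b t ih =>
    rw [List.reverse_cons, List.countP_append, ih, List.countP_cons, List.countP_cons,
      List.countP_nil]
    omega

lemma cntY_invW (l : List Blk) : cntY (invW p q l) = cntY l := by
  rw [invW, cntY, countP_rev, List.countP_map, cntY]
  congr 1
  funext b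
  cases b <;> rfl

lemma hY_invW_rev (l : List Blk) : hY (invW p q l).reverse = hY l := by
  rw [invW, List.reverse_reverse]
  cases l with
  | nil => rfl
  | cons b t =>
    show hY (invB p q b :: t.map (invB p q)) = hY (b :: t)
    cases b <;> rfl

lemma gap (k : ℤ) (l : List Blk) (h : wf p q l) :
    0 ≤ k + (Nc l : ℤ) ∨ 0 ≤ (-k - l.length) + (Nc (invW p q l) : ℤ) := by
  by_cases hl : l = []
  · subst hl
    simp [Nc, invW]
    omega
  · by_contra hcon
    push_neg at hcon
    obtain ⟨h1, h2⟩ := hcon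
    have e1 := NcEq p q l h
    have e2 := NcEq p q (invW p q l) (wf_invW p q h)
    rw [hY_invW_rev, cntY_invW] at e2
    have e3 := length_eq_cnt l
    have e4 := alt_count p q l h hl
    omega

lemma bothsides (k : ℤ) (l : List Blk) (h : wf p q l)
    (h1 : 0 ≤ k + (Nc l : ℤ)) (h2 : 0 ≤ (-k - l.length) + (Nc (invW p q l) : ℤ)) :
    k = 0 ∧ l = [] := by
  by_cases hl : l = []
  · subst hl
    simp [Nc, invW] at h1 h2
    exact ⟨by omega, rfl⟩
  · exfalso
    have e1 := NcEq p q l h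
    have e2 := NcEq p q (invW p q l) (wf_invW p q h)
    rw [hY_invW_rev, cntY_invW] at e2
    have e3 := length_eq_cnt l
    have e4 := alt_count p q l h hl
    omega

end InvGap
end Stmt17
namespace Stmt17
section Surj
open Blk
variable (p q : ℕ) (hp : 1 ≤ p) (hq : 1 ≤ q)

include hp in
lemma pi_ax_iter : ∀ (j : ℕ) {n : K}, wf p q n.2 →
    piK p q ((axK p)^[j] n) = piK p q n * (xT p q)^j := by
  intro j
  induction j with
  | zero => intro n h; simp
  | succ m ih =>
    intro n h
    rw [Function.iterate_succ_apply, ih (wf_axK p q hp h), pi_ax p q h, mul_assoc, ← pow_succ']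

include hq in
lemma pi_ay_iter : ∀ (j : ℕ) {n : K}, wf p q n.2 →
    piK p q ((ayK q)^[j] n) = piK p q n * (yT p q)^j := by
  intro j
  induction j with
  | zero => intro n h; simp
  | succ m ih =>
    intro n h
    rw [Function.iterate_succ_apply, ih (wf_ayK p q hq h), pi_ay p q h, mul_assoc, ← pow_succ']

lemma czpow_neg_one : (cT p q)^(-1:ℤ) = (cT p q)⁻¹ := zpow_neg_one _

lemma xinv_eq : (xT p q)⁻¹ = (xT p q)^p * (cT p q)^(-1:ℤ) := by
  apply inv_eq_of_mul_eq_one_right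
  rw [← mul_assoc, ← pow_succ']
  show (cT p q) * (cT p q)^(-1:ℤ) = 1
  rw [czpow_neg_one, mul_inv_cancel]

lemma yinv_eq : (yT p q)⁻¹ = (yT p q)^q * (cT p q)^(-1:ℤ) := by
  apply inv_eq_of_mul_eq_one_right
  rw [← mul_assoc, ← pow_succ', ← torus_rel]
  show (cT p q) * (cT p q)^(-1:ℤ) = 1
  rw [czpow_neg_one, mul_inv_cancel]

include hp in
lemma pi_xinv {n : K} (h : wf p q n.2) :
    piK p q (shiftK (-1) ((axK p)^[p] n)) = piK p q n * (xT p q)⁻¹ := by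
  rw [pi_shift, pi_ax_iter p q hp p h, mul_assoc, ← xinv_eq]

include hq in
lemma pi_yinv {n : K} (h : wf p q n.2) :
    piK p q (shiftK (-1) ((ayK q)^[q] n)) = piK p q n * (yT p q)⁻¹ := by
  rw [pi_shift, pi_ay_iter p q hq q h, mul_assoc, ← yinv_eq]

def mkT : FreeGroup Bool →* TorusGroup p q :=
  PresentedGroup.mk ({FreeGroup.of A ^ (p + 1) * (FreeGroup.of B ^ (q + 1))⁻¹} :
    Set (FreeGroup Bool))

include hp hq in
lemma piK_surj_aux : ∀ (z : FreeGroup Bool) (n : K), wf p q n.2 →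
    ∃ m : K, wf p q m.2 ∧ piK p q m = piK p q n * mkT p q z := by
  intro z
  induction z using FreeGroup.induction_on with
  | C1 => intro n h; exact ⟨n, h, by rw [map_one, mul_one]⟩
  | of b =>
    intro n h
    cases b with
    | true => exact ⟨axK p n, wf_axK p q hp h, pi_ax p q h⟩
    | false => exact ⟨ayK q n, wf_ayK p q hq h, pi_ay p q h⟩
  | inv_of b _ =>
    intro n h
    cases b with
    | true =>
      refine ⟨shiftK (-1) ((axK p)^[p] n), wf_shiftK p q _ (wf_axK_iter p q hp p h), ?_⟩
      rw [pi_xinv p q hp h, map_inv]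
      exact rfl
    | false =>
      refine ⟨shiftK (-1) ((ayK q)^[q] n), wf_shiftK p q _ (wf_ayK_iter p q hq q h), ?_⟩
      rw [pi_yinv p q hq h, map_inv]
      exact rfl
  | mul z1 z2 ih1 ih2 =>
    intro n h
    obtain ⟨m1, h1, e1⟩ := ih1 n h
    obtain ⟨m2, h2, e2⟩ := ih2 m1 h1
    exact ⟨m2, h2, by rw [e2, e1, map_mul, mul_assoc]⟩

lemma piK_eps : piK p q ((0:ℤ), ([]:List Blk)) = 1 := by
  show prodW p q [] * (cT p q)^(0:ℤ) = 1
  rw [show prodW p q [] = 1 from rfl, zpow_zero, one_mul]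

include hp hq in
lemma piK_surj (g : TorusGroup p q) : ∃ n : K, wf p q n.2 ∧ piK p q n = g := by
  induction g using PresentedGroup.induction_on with
  | H z =>
    obtain ⟨m, hm, em⟩ := piK_surj_aux p q hp hq z ((0:ℤ), ([]:List Blk)) (wf_nil p q)
    exact ⟨m, hm, by rw [em, piK_eps, one_mul]; rfl⟩

end Surj
end Stmt17

namespace Stmt17

/-- **Proposition 8.1 and Corollary 8.2.** For `p, q ≥ 1`, in the monoid
`M = ⟨a, b | a = b (aᵖ b)^q⟩⁺` the element `a^{p+1}` is central, `M` is of `O`-type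
(cancellative, trivial units, left- and right-divisibility linear), and the group
`⟨a, b | a = b (aᵖ b)^q⟩` is isomorphic to the torus knot group
`⟨x, y | x^{p+1} = y^{q+1}⟩` via `x ↦ a`, `y ↦ aᵖ b`. -/
theorem stmt_17 (p q : ℕ) (hp : 1 ≤ p) (hq : 1 ≤ q) :
    (∀ g : M17 p q, g * (cls p q [A]) ^ (p + 1) = (cls p q [A]) ^ (p + 1) * g) ∧
    ((∀ a b c : M17 p q, a * b = a * c → b = c) ∧
     (∀ a b c : M17 p q, a * c = b * c → a = b) ∧
     (∀ a b : M17 p q, a * b = 1 → a = 1) ∧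
     (∀ g h : M17 p q, g ∣ h ∨ h ∣ g) ∧
     (∀ g h : M17 p q, (∃ c, h = c * g) ∨ (∃ c, g = c * h))) ∧
    (∃ e : TorusGroup p q ≃* MonGroup p q,
      e (PresentedGroup.of A) = PresentedGroup.of A ∧
      e (PresentedGroup.of B) =
        (PresentedGroup.of A : MonGroup p q) ^ p * PresentedGroup.of B) := by
  have hcw0 : cls p q (cw p 0 []) = 1 := by
    rw [cw_nil, show (p+1) * (0:ℤ).toNat = 0 from by simp, show repA 0 = [] from rfl, cls_nil]
  refine ⟨fun g => c_central p q g, ⟨?_, ?_, ?_, ?_, ?_⟩,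
    ⟨eTM p q, eTM_of_A p q, eTM_of_B p q⟩⟩
  · -- left cancellation
    intro a b c h
    apply phi_inj p q hp hq
    have h2 := congrArg (phi p q) h
    rw [map_mul, map_mul] at h2
    exact mul_left_cancel h2
  · -- right cancellation
    intro a b c h
    apply phi_inj p q hp hq
    have h2 := congrArg (phi p q) h
    rw [map_mul, map_mul] at h2
    exact mul_right_cancel h2
  · -- trivial units
    intro a b h
    obtain ⟨u, rfl⟩ := cls_surjective p q a
    obtain ⟨v, rfl⟩ := cls_surjective p q b
    have hphi := congrArg (phi p q) h
    rw [map_mul, map_one, phi_cls, phi_cls, ← pi_nfK p q hp hq u, ← pi_nfK p q hp hq v] at hphi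
    have hnu := Pnf_nfK p q hp hq u
    have hnv := Pnf_nfK p q hp hq v
    have heq : piK p q (nfK p q u) = piK p q (invK p q (nfK p q v)) := by
      rw [pi_inv p q hnv.1]
      exact eq_inv_of_mul_eq_one_left hphi
    have hK : nfK p q u = invK p q (nfK p q v) :=
      piK_inj p q hp hq hnu.1 (wf_invW p q hnv.1) heq
    have hbudget : (0:ℤ) ≤ (-(nfK p q v).1 - (nfK p q v).2.length)
        + (Nc (invW p q (nfK p q v).2) : ℤ) := by
      have := hnu.2
      rw [hK] at this
      exact this
    obtain ⟨hk0, hl0⟩ := bothsides p q (nfK p q v).1 (nfK p q v).2 hnv.1 hnv.2 hbudget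
    have hKu : nfK p q u = ((0:ℤ), ([]:List Blk)) := by
      rw [hK, invK, hk0, hl0]
      simp [invW]
    rw [cls_nfK p q hp hq u, hKu]
    exact hcw0
  · -- left divisibility linear
    intro g h
    obtain ⟨u, rfl⟩ := cls_surjective p q g
    obtain ⟨v, rfl⟩ := cls_surjective p q h
    obtain ⟨d, hdwf, hd⟩ := piK_surj p q hp hq
      ((piK p q (nfK p q u))⁻¹ * piK p q (nfK p q v))
    have hdeta : piK p q (d.1, d.2) = piK p q d := rfl
    rcases gap p q d.1 d.2 hdwf with hcase | hcase
    · left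
      refine ⟨cls p q (cw p d.1 d.2), ?_⟩
      apply phi_inj p q hp hq
      rw [map_mul, S' p q d.2 d.1 ⟨hdwf, hcase⟩, hdeta, hd, phi_cls, phi_cls,
        ← pi_nfK p q hp hq u, ← pi_nfK p q hp hq v, mul_inv_cancel_left]
    · right
      refine ⟨cls p q (cw p (invK p q d).1 (invK p q d).2), ?_⟩
      apply phi_inj p q hp hq
      have hS : phi p q (cls p q (cw p (invK p q d).1 (invK p q d).2))
          = piK p q (invK p q d) := by
        rw [S' p q (invK p q d).2 (invK p q d).1 ⟨wf_invW p q hdwf, hcase⟩]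
      rw [map_mul, hS, pi_inv p q hdwf, hd, phi_cls, phi_cls,
        ← pi_nfK p q hp hq u, ← pi_nfK p q hp hq v, mul_inv_rev, inv_inv,
        mul_inv_cancel_left]
  · -- right divisibility linear
    intro g h
    obtain ⟨u, rfl⟩ := cls_surjective p q g
    obtain ⟨v, rfl⟩ := cls_surjective p q h
    obtain ⟨d, hdwf, hd⟩ := piK_surj p q hp hq
      (piK p q (nfK p q v) * (piK p q (nfK p q u))⁻¹)
    have hdeta : piK p q (d.1, d.2) = piK p q d := rfl
    rcases gap p q d.1 d.2 hdwf with hcase | hcase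
    · left
      refine ⟨cls p q (cw p d.1 d.2), ?_⟩
      apply phi_inj p q hp hq
      rw [map_mul, S' p q d.2 d.1 ⟨hdwf, hcase⟩, hdeta, hd, phi_cls, phi_cls,
        ← pi_nfK p q hp hq u, ← pi_nfK p q hp hq v, inv_mul_cancel_right]
    · right
      refine ⟨cls p q (cw p (invK p q d).1 (invK p q d).2), ?_⟩
      apply phi_inj p q hp hq
      have hS : phi p q (cls p q (cw p (invK p q d).1 (invK p q d).2))
          = piK p q (invK p q d) := by
        rw [S' p q (invK p q d).2 (invK p q d).1 ⟨wf_invW p q hdwf, hcase⟩]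
      rw [map_mul, hS, pi_inv p q hdwf, hd, phi_cls, phi_cls,
        ← pi_nfK p q hp hq u, ← pi_nfK p q hp hq v, mul_inv_rev, inv_inv,
        inv_mul_cancel_right]


end Stmt17
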